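/- arXiv:1510.06680 — 5 statements merged into one kernel-verified Lean document; each statement's English description precedes it below -/
import Mathlib

section
/- Let D=(Ω,B) be a supersimple 2-(n,4,λ) design with n > 2λ+2, let ∞ ∈ Ω and let G := L_∞(D) be its Conway groupoid. If G is closed under composition (equivalently, G is a subgroup of Sym(Ω)), then G acts primitively on Ω. -/
open Equiv

variable {Ω : Type*}

/-- `(Ω, B)` is a `2-(n,4,lam)` design: `Ω` has `n` points, every line has 4 points,
and every 2-element subset of `Ω` is contained in exactly `lam` lines. -/
def IsDesign [Fintype Ω] (B : Set (Finset Ω)) (n lam : ℕ) : Prop :=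
  Fintype.card Ω = n ∧
  (∀ L ∈ B, L.card = 4) ∧
  (∀ p : Finset Ω, p.card = 2 → {L ∈ B | p ⊆ L}.ncard = lam)

/-- A design is supersimple if any two distinct lines intersect in at most two points. -/
def Supersimple [DecidableEq Ω] (B : Set (Finset Ω)) : Prop :=
  ∀ L₁ ∈ B, ∀ L₂ ∈ B, L₁ ≠ L₂ → (L₁ ∩ L₂).card ≤ 2

/-- Condition (△): the symmetric difference of two lines meeting in two points is a line. -/
def SymmDiffCond [DecidableEq Ω] (B : Set (Finset Ω)) : Prop :=
  ∀ L₁ ∈ B, ∀ L₂ ∈ B, (L₁ ∩ L₂).card = 2 → symmDiff L₁ L₂ ∈ B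

/-- The collinear triples: 3-element subsets contained in some line. -/
def collinearTriples (B : Set (Finset Ω)) : Set (Finset Ω) :=
  { t | t.card = 3 ∧ ∃ L ∈ B, t ⊆ L }

/-- `(Ω, C)` is a regular two-graph: `C` is a set of 3-element subsets, every 2-element
subset lies in exactly `μ` members of `C` for a constant `μ`, and every 4-element subset
contains exactly 0, 2 or 4 members of `C`. -/
def IsRegularTwoGraph (C : Set (Finset Ω)) : Prop :=
  (∀ t ∈ C, t.card = 3) ∧
  (∃ μ : ℕ, ∀ p : Finset Ω, p.card = 2 → {t ∈ C | p ⊆ t}.ncard = μ) ∧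
  (∀ q : Finset Ω, q.card = 4 →
    {t ∈ C | t ⊆ q}.ncard = 0 ∨ {t ∈ C | t ⊆ q}.ncard = 2 ∨ {t ∈ C | t ⊆ q}.ncard = 4)

/-- `mv a b` is the elementary move `[a,b]`: it is the identity when `a = b`; when `a ≠ b`
it interchanges `a` and `b`, interchanges `x` and `y` whenever `{a,b,x,y}` is a line, and
fixes every point not collinear with `a, b`. -/
def IsElemMoveFn [DecidableEq Ω] (B : Set (Finset Ω)) (mv : Ω → Ω → Equiv.Perm Ω) : Prop :=
  (∀ a, mv a a = 1) ∧
  ∀ a b : Ω, a ≠ b →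
    mv a b a = b ∧ mv a b b = a ∧
    (∀ x y : Ω, ({a, b, x, y} : Finset Ω) ∈ B → mv a b x = y) ∧
    (∀ x : Ω, x ≠ a → x ≠ b → (∀ L ∈ B, ¬(a ∈ L ∧ b ∈ L ∧ x ∈ L)) → mv a b x = x)

/-- The move sequence `[a, b₁, …, b_k] = [a,b₁][b₁,b₂]⋯[b_{k-1},b_k]`; the factors are
applied left-to-right (so in Lean's convention the product is reversed). -/
def moveSeq (mv : Ω → Ω → Equiv.Perm Ω) : Ω → List Ω → Equiv.Perm Ω
  | _, [] => 1
  | a, b :: l => moveSeq mv b l * mv a b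

/-- The Conway groupoid `L_x(D)`: all move sequences starting at `x`. -/
def ConwayGroupoid (mv : Ω → Ω → Equiv.Perm Ω) (x : Ω) : Set (Equiv.Perm Ω) :=
  { g | ∃ l : List Ω, g = moveSeq mv x l }

/-- The hole stabilizer `π_x(D)`: all move sequences starting and ending at `x`. -/
def holeStabilizer (mv : Ω → Ω → Equiv.Perm Ω) (x : Ω) : Set (Equiv.Perm Ω) :=
  { g | ∃ l : List Ω, g = moveSeq mv x (l ++ [x]) }

/-- `L(D)`: the set of all move sequences. -/
def allMoveSeqs (mv : Ω → Ω → Equiv.Perm Ω) : Set (Equiv.Perm Ω) :=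
  { g | ∃ (a : Ω) (l : List Ω), g = moveSeq mv a l }

/-- The set `E` of elementary moves `[a,b]` with `a ≠ b`. -/
def elemMoves (mv : Ω → Ω → Equiv.Perm Ω) : Set (Equiv.Perm Ω) :=
  { g | ∃ a b : Ω, a ≠ b ∧ g = mv a b }

/-- `\overline{x,y}`: the set of points lying on a common line with `x` and `y`. -/
def lineJoin (B : Set (Finset Ω)) (x y : Ω) : Set Ω :=
  { z | ∃ L ∈ B, x ∈ L ∧ y ∈ L ∧ z ∈ L }

/-- A set `G` of permutations is transitive on `S`. -/
def SetTransitiveOn (G : Set (Equiv.Perm Ω)) (S : Set Ω) : Prop :=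
  ∀ x ∈ S, ∀ y ∈ S, ∃ g ∈ G, g x = y

/-- `Δ` is a block for the set `G` of permutations. -/
def SetIsBlock (G : Set (Equiv.Perm Ω)) (Δ : Set Ω) : Prop :=
  ∀ g ∈ G, (⇑g) '' Δ = Δ ∨ Disjoint ((⇑g) '' Δ) Δ

/-- A set `G` of permutations is primitive on `S`: it is transitive on `S` and every
block contained in `S` is trivial (equivalently, the only invariant partitions are the
partition into singletons and the one-part partition). -/
def SetPrimitiveOn (G : Set (Equiv.Perm Ω)) (S : Set Ω) : Prop :=
  SetTransitiveOn G S ∧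
  ∀ Δ : Set Ω, Δ ⊆ S → SetIsBlock G Δ → Δ.Subsingleton ∨ Δ = S

/-- Primitivity on all of `Ω`. -/
def SetPrimitive (G : Set (Equiv.Perm Ω)) : Prop :=
  SetPrimitiveOn G Set.univ

/-- `(G, E)` is a 3-transposition group: `G` is the group generated by `E`, `E` is a
union of `G`-conjugacy classes of involutions, and any product of two members of `E`
has order 1, 2 or 3. -/
def Is3TranspositionGroup (G E : Set (Equiv.Perm Ω)) : Prop :=
  ((Subgroup.closure E : Subgroup (Equiv.Perm Ω)) : Set (Equiv.Perm Ω)) = G ∧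
  (∀ e ∈ E, orderOf e = 2) ∧
  (∀ g ∈ G, ∀ e ∈ E, g * e * g⁻¹ ∈ E) ∧
  (∀ g ∈ E, ∀ h ∈ E, orderOf (g * h) = 1 ∨ orderOf (g * h) = 2 ∨ orderOf (g * h) = 3)

/-- Two designs are isomorphic: a bijection of the point sets carrying lines to lines. -/
def DesignIso {Ω₁ Ω₂ : Type*} (B₁ : Set (Finset Ω₁)) (B₂ : Set (Finset Ω₂)) : Prop :=
  ∃ e : Ω₁ ≃ Ω₂, ∀ L : Finset Ω₁, L ∈ B₁ ↔ L.map e.toEmbedding ∈ B₂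

/-- The lines of the Boolean quadruple system of order `2^m`: 4-subsets of `F_2^m`
summing to zero. -/
def booleanLines (m : ℕ) : Set (Finset (Fin m → ZMod 2)) :=
  { L | L.card = 4 ∧ ∑ v ∈ L, v = 0 }

/-- `V = F_2^{2m}`, with coordinates indexed by `Fin m ⊕ Fin m`. -/
abbrev Vsp (m : ℕ) := (Fin m ⊕ Fin m) → ZMod 2

/-- `θ(u) = u e uᵀ` where `e` is the block matrix `(0 I; 0 0)`. -/
def theta {m : ℕ} (u : Vsp m) : ZMod 2 :=
  ∑ i : Fin m, u (Sum.inl i) * u (Sum.inr i)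

/-- The lines of the design `D^a`: 4-subsets of `V` summing to zero on which `θ` sums
to zero. -/
def linesA (m : ℕ) : Set (Finset (Vsp m)) :=
  { L | L.card = 4 ∧ ∑ v ∈ L, v = 0 ∧ ∑ v ∈ L, theta v = 0 }

/-- The lines of the design `D^ε`: 4-subsets of `{v ∈ V : θ(v) = ε}` summing to zero. -/
def linesEps (m : ℕ) (ε : ZMod 2) : Set (Finset {v : Vsp m // theta v = ε}) :=
  { L | L.card = 4 ∧ ∑ v ∈ L, (v : Vsp m) = 0 }

/-- The derived graph `G_{D,∞}`: vertices are the points other than `∞`, with `a, b`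
adjacent iff `{∞,a,b}` is a collinear triple. -/
def derivedGraph [DecidableEq Ω] (B : Set (Finset Ω)) (inf : Ω) :
    SimpleGraph {x : Ω // x ≠ inf} where
  Adj a b := a ≠ b ∧ ({inf, (a : Ω), (b : Ω)} : Finset Ω) ∈ collinearTriples B
  symm := by
    constructor
    rintro a b ⟨hab, h⟩
    exact ⟨hab.symm, by rwa [Finset.pair_comm (b : Ω) (a : Ω)]⟩
  loopless := by constructor; rintro a ⟨h, -⟩; exact h rfl

/-- `w` witnesses the triangle property for the edge `{u,v}`: `w` is a common neighbour
of `u` and `v`, and every other vertex is adjacent to exactly one or three of `u,v,w`. -/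
def TriangleWitness {V : Type*} (G : SimpleGraph V) (u v w : V) : Prop :=
  G.Adj u w ∧ G.Adj v w ∧
  ∀ x : V, x ∉ ({u, v, w} : Set V) →
    ({y ∈ ({u, v, w} : Set V) | G.Adj x y}.ncard = 1 ∨
     {y ∈ ({u, v, w} : Set V) | G.Adj x y}.ncard = 3)

/-- The triangle property for a graph. -/
def HasTriangleProperty {V : Type*} (G : SimpleGraph V) : Prop :=
  (∃ u v, G.Adj u v) ∧ ∀ u v : V, G.Adj u v → ∃ w, TriangleWitness G u v w

/-- The strong triangle property: each edge has a unique triangle-property witness. -/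
def HasStrongTriangleProperty {V : Type*} (G : SimpleGraph V) : Prop :=
  (∃ u v, G.Adj u v) ∧ ∀ u v : V, G.Adj u v → ∃! w, TriangleWitness G u v w

/-- A coherent 4-subset: all four of its 3-element subsets lie in `C`. -/
def IsCoherent (C : Set (Finset Ω)) (q : Finset Ω) : Prop :=
  q.card = 4 ∧ ∀ t ⊆ q, t.card = 3 → t ∈ C
section MyAuxiliary

variable [Fintype Ω] [DecidableEq Ω]

lemma my_card_triple {a c z : Ω} (hac : a ≠ c) (hza : z ≠ a) (hzc : z ≠ c) :
    ({a, c, z} : Finset Ω).card = 3 := by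
  rw [Finset.card_insert_of_notMem (by simp [hac, hza.symm]),
    Finset.card_insert_of_notMem (by simp [hzc.symm]), Finset.card_singleton]

lemma my_exists_fourth {L : Finset Ω} (hL4 : L.card = 4) {a c z : Ω}
    (ha : a ∈ L) (hc : c ∈ L) (hz : z ∈ L) (hac : a ≠ c) (hza : z ≠ a) (hzc : z ≠ c) :
    ∃ w, w ≠ a ∧ w ≠ c ∧ w ≠ z ∧ L = {a, c, z, w} := by
  have h3sub : ({a, c, z} : Finset Ω) ⊆ L := by
    intro u hu
    simp only [Finset.mem_insert, Finset.mem_singleton] at hu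
    rcases hu with rfl | rfl | rfl <;> assumption
  have h3card : ({a, c, z} : Finset Ω).card = 3 := my_card_triple hac hza hzc
  have h1 : (L \ ({a, c, z} : Finset Ω)).card = 1 := by
    rw [Finset.card_sdiff_of_subset h3sub, hL4, h3card]
  obtain ⟨w, hw⟩ := Finset.card_eq_one.mp h1
  have hwmem : w ∈ L \ ({a, c, z} : Finset Ω) := by rw [hw]; exact Finset.mem_singleton_self w
  rw [Finset.mem_sdiff] at hwmem
  obtain ⟨hwL, hwn⟩ := hwmem
  simp only [Finset.mem_insert, Finset.mem_singleton, not_or] at hwn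
  obtain ⟨hwa', hwc', hwz'⟩ := hwn
  have hwa : w ≠ a := hwa'
  have hwc : w ≠ c := hwc'
  have hwz : w ≠ z := hwz'
  refine ⟨w, hwa, hwc, hwz, ?_⟩
  have hsub : ({a, c, z, w} : Finset Ω) ⊆ L := by
    intro u hu
    simp only [Finset.mem_insert, Finset.mem_singleton] at hu
    rcases hu with rfl | rfl | rfl | rfl <;> assumption
  have hcard : ({a, c, z, w} : Finset Ω).card = 4 := by
    rw [Finset.card_insert_of_notMem (by simp [hac, hza.symm, hwa.symm]),
      Finset.card_insert_of_notMem (by simp [hzc.symm, hwc.symm]),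
      Finset.card_insert_of_notMem (by simp [hwz.symm]), Finset.card_singleton]
  exact (Finset.eq_of_subset_of_card_le hsub (by rw [hL4, hcard])).symm

lemma my_mv_sq {B : Set (Finset Ω)} {mv : Ω → Ω → Equiv.Perm Ω}
    (hmv : IsElemMoveFn B mv) (hB4 : ∀ L ∈ B, L.card = 4) (a b : Ω) :
    mv a b * mv a b = 1 := by
  rcases eq_or_ne a b with rfl | hab
  · rw [hmv.1, mul_one]
  obtain ⟨h1, h2, h3, h4⟩ := hmv.2 a b hab
  ext z
  simp only [Equiv.Perm.mul_apply, Equiv.Perm.one_apply]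
  by_cases hza : z = a
  · subst hza; rw [h1, h2]
  by_cases hzb : z = b
  · subst hzb; rw [h2, h1]
  by_cases hline : ∃ L ∈ B, a ∈ L ∧ b ∈ L ∧ z ∈ L
  · obtain ⟨L, hL, haL, hbL, hzL⟩ := hline
    obtain ⟨w, hwa, hwb, hwz, hLeq⟩ := my_exists_fourth (hB4 L hL) haL hbL hzL hab hza hzb
    have e1 : mv a b z = w := h3 z w (hLeq ▸ hL)
    have e2 : mv a b w = z := by
      apply h3 w z
      have : ({a, b, w, z} : Finset Ω) = L := by
        rw [hLeq]; ext u
        simp only [Finset.mem_insert, Finset.mem_singleton]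
        tauto
      rw [this]; exact hL
    rw [e1, e2]
  · push_neg at hline
    have hfix : mv a b z = z := h4 z hza hzb (fun L hL hcon => hline L hL hcon.1 hcon.2.1 hcon.2.2)
    rw [hfix, hfix]

lemma my_card_moved {B : Set (Finset Ω)} {n lam : ℕ} {mv : Ω → Ω → Equiv.Perm Ω}
    (hD : IsDesign B n lam) (hss : Supersimple B) (hmv : IsElemMoveFn B mv)
    {a c : Ω} (hac : a ≠ c) :
    {z | mv a c z ≠ z}.ncard = 2 * lam + 2 := by
  classical
  obtain ⟨h1, h2, h3, h4⟩ := hmv.2 a c hac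
  have hpc : ({a, c} : Finset Ω).card = 2 := by
    rw [Finset.card_insert_of_notMem (by simp [hac]), Finset.card_singleton]
  have hls := hD.2.2 {a, c} hpc
  have hfin : {L ∈ B | ({a, c} : Finset Ω) ⊆ L}.Finite := Set.toFinite _
  set S : Finset (Finset Ω) := hfin.toFinset with hSdef
  have hScard : S.card = lam := by
    rw [hSdef, ← Set.ncard_eq_toFinset_card _ hfin]; exact hls
  have hSmem : ∀ L, L ∈ S ↔ L ∈ B ∧ a ∈ L ∧ c ∈ L := by
    intro L
    rw [hSdef, Set.Finite.mem_toFinset]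
    constructor
    · rintro ⟨hL, hsub⟩
      exact ⟨hL, hsub (by simp), hsub (by simp)⟩
    · rintro ⟨hL, haL, hcL⟩
      refine ⟨hL, ?_⟩
      intro u hu
      simp only [Finset.mem_insert, Finset.mem_singleton] at hu
      rcases hu with rfl | rfl <;> assumption
  have hkey : {z | mv a c z ≠ z} =
      ↑(({a, c} : Finset Ω) ∪ S.biUnion (fun L => L \ ({a, c} : Finset Ω))) := by
    ext z
    simp only [Set.mem_setOf_eq, Finset.coe_union, Set.mem_union, Finset.mem_coe,
      Finset.mem_union, Finset.mem_insert, Finset.mem_singleton, Finset.mem_biUnion,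
      Finset.mem_sdiff, not_or]
    constructor
    · intro hz
      by_cases hza : z = a
      · exact Or.inl (Or.inl hza)
      by_cases hzc : z = c
      · exact Or.inl (Or.inr hzc)
      right
      have hline : ∃ L ∈ B, a ∈ L ∧ c ∈ L ∧ z ∈ L := by
        by_contra hno
        push_neg at hno
        exact hz (h4 z hza hzc (fun L hL hcon => hno L hL hcon.1 hcon.2.1 hcon.2.2))
      obtain ⟨L, hL, haL, hcL, hzL⟩ := hline
      exact ⟨L, (hSmem L).mpr ⟨hL, haL, hcL⟩, hzL, hza, hzc⟩
    · rintro ((rfl | rfl) | ⟨L, hLS, hzL, hza, hzc⟩)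
      · rw [h1]; exact hac.symm
      · rw [h2]; exact hac
      · obtain ⟨hL, haL, hcL⟩ := (hSmem L).mp hLS
        obtain ⟨w, hwa, hwc, hwz, hLeq⟩ :=
          my_exists_fourth (hD.2.1 L hL) haL hcL hzL hac hza hzc
        have := h3 z w (hLeq ▸ hL)
        rw [this]; exact hwz
  rw [hkey, Set.ncard_coe_finset]
  have hdisj : Disjoint ({a, c} : Finset Ω) (S.biUnion (fun L => L \ ({a, c} : Finset Ω))) := by
    rw [Finset.disjoint_left]
    intro z hz hz2
    rw [Finset.mem_biUnion] at hz2
    obtain ⟨L, -, hzL⟩ := hz2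
    exact (Finset.mem_sdiff.mp hzL).2 hz
  rw [Finset.card_union_of_disjoint hdisj, hpc]
  have hpair : ∀ L₁ ∈ S, ∀ L₂ ∈ S, L₁ ≠ L₂ →
      Disjoint (L₁ \ ({a, c} : Finset Ω)) (L₂ \ ({a, c} : Finset Ω)) := by
    intro L₁ hL₁ L₂ hL₂ hne
    rw [Finset.disjoint_left]
    intro z hz1 hz2
    rw [Finset.mem_sdiff] at hz1 hz2
    simp only [Finset.mem_insert, Finset.mem_singleton, not_or] at hz1
    obtain ⟨hzL₁, hza, hzc⟩ := hz1
    obtain ⟨m1, ha1, hc1⟩ := (hSmem L₁).mp hL₁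
    obtain ⟨m2, ha2, hc2⟩ := (hSmem L₂).mp hL₂
    have hle := hss L₁ m1 L₂ m2 hne
    have hsub : ({a, c, z} : Finset Ω) ⊆ L₁ ∩ L₂ := by
      intro u hu
      simp only [Finset.mem_insert, Finset.mem_singleton] at hu
      rw [Finset.mem_inter]
      rcases hu with rfl | rfl | rfl
      · exact ⟨ha1, ha2⟩
      · exact ⟨hc1, hc2⟩
      · exact ⟨hzL₁, hz2.1⟩
    have := Finset.card_le_card hsub
    rw [my_card_triple hac hza hzc] at this
    omega
  rw [Finset.card_biUnion hpair]
  have hconst : ∀ L ∈ S, (L \ ({a, c} : Finset Ω)).card = 2 := by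
    intro L hLS
    obtain ⟨hL, haL, hcL⟩ := (hSmem L).mp hLS
    have hsub : ({a, c} : Finset Ω) ⊆ L := by
      intro u hu
      simp only [Finset.mem_insert, Finset.mem_singleton] at hu
      rcases hu with rfl | rfl <;> assumption
    rw [Finset.card_sdiff_of_subset hsub, hD.2.1 L hL, hpc]
  rw [Finset.sum_congr rfl hconst, Finset.sum_const, hScard, smul_eq_mul]
  omega

end MyAuxiliary

/-- Theorem A(a): if the Conway groupoid `L_∞(D)` of a supersimple
`2-(n,4,λ)` design with `n > 2λ+2` is closed under composition, then it is a primitive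
subgroup of `Sym(Ω)`. -/
theorem conwayGroupoid_primitive_of_closed [Fintype Ω] [DecidableEq Ω]
    {B : Set (Finset Ω)} {n lam : ℕ}
    (hD : IsDesign B n lam) (hss : Supersimple B) (hn : 2 * lam + 2 < n)
    (mv : Ω → Ω → Equiv.Perm Ω) (hmv : IsElemMoveFn B mv) (inf : Ω)
    (hclosed : ∀ g ∈ ConwayGroupoid mv inf, ∀ h ∈ ConwayGroupoid mv inf,
      g * h ∈ ConwayGroupoid mv inf) :
    SetPrimitive (ConwayGroupoid mv inf) := by
  classical
  set G := ConwayGroupoid mv inf with hGdef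
  have hone : (1 : Equiv.Perm Ω) ∈ G := ⟨[], rfl⟩
  have hsq : ∀ a b : Ω, mv a b * mv a b = 1 := my_mv_sq hmv hD.2.1
  have hmvG : ∀ a b : Ω, mv a b ∈ G := by
    intro a b
    have h1 : mv inf a ∈ G := ⟨[a], by simp [moveSeq]⟩
    have h2 : mv a b * mv inf a ∈ G := ⟨[a, b], by simp [moveSeq]⟩
    have h3 := hclosed _ h2 _ h1
    rwa [mul_assoc, hsq, mul_one] at h3
  have hpow : ∀ g ∈ G, ∀ k : ℕ, g ^ (k + 1) ∈ G := by
    intro g hg k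
    induction k with
    | zero => simpa using hg
    | succ m ih => rw [pow_succ]; exact hclosed _ ih _ hg
  have hinv : ∀ g ∈ G, g⁻¹ ∈ G := by
    intro g hg
    obtain ⟨m, hm⟩ := Nat.exists_eq_add_of_lt (orderOf_pos g)
    have hmul : g * g ^ m = 1 := by
      rw [← pow_succ', show m + 1 = orderOf g by omega]
      exact pow_orderOf_eq_one g
    have hginv : g⁻¹ = g ^ m := inv_eq_of_mul_eq_one_right hmul
    rcases Nat.eq_zero_or_pos m with rfl | hmpos
    · rw [hginv, pow_zero]; exact hone
    · obtain ⟨k, hk⟩ := Nat.exists_eq_add_of_lt hmpos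
      rw [hginv, show m = k + 1 by omega]
      exact hpow g hg k
  have htrans : ∀ x y : Ω, ∃ g ∈ G, g x = y := by
    intro x y
    have hx : mv inf x x = inf := by
      rcases eq_or_ne inf x with rfl | h
      · rw [hmv.1]; rfl
      · exact (hmv.2 inf x h).2.1
    have hy : mv inf y inf = y := by
      rcases eq_or_ne inf y with rfl | h
      · rw [hmv.1]; rfl
      · exact (hmv.2 inf y h).1
    exact ⟨mv inf y * mv inf x, hclosed _ (hmvG inf y) _ (hmvG inf x),
      by rw [Equiv.Perm.mul_apply, hx, hy]⟩
  constructor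
  · intro x _ y _; exact htrans x y
  intro Δ _ hblock
  by_contra hcon
  push_neg at hcon
  obtain ⟨hns, hne⟩ := hcon
  obtain ⟨c₀, hc₀⟩ := (Set.ne_univ_iff_exists_notMem Δ).mp hne
  obtain ⟨a₀, ha₀, b₀, hb₀, hab₀⟩ := hns
  choose gg hggG hgga using fun x : Ω => htrans a₀ x
  set Bx : Ω → Set Ω := fun x => ⇑(gg x) '' Δ with hBxdef
  have hEoD : ∀ g₁ ∈ G, ∀ g₂ ∈ G,
      ⇑g₁ '' Δ = ⇑g₂ '' Δ ∨ Disjoint (⇑g₁ '' Δ) (⇑g₂ '' Δ) := by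
    intro g₁ hg₁ g₂ hg₂
    have hmem' : g₂⁻¹ * g₁ ∈ G := hclosed _ (hinv _ hg₂) _ hg₁
    rcases hblock _ hmem' with heq | hdis
    · left
      have := congrArg (Set.image ⇑g₂) heq
      rwa [← Set.image_comp, ← Equiv.Perm.coe_mul, mul_inv_cancel_left] at this
    · right
      have h2 : Disjoint (⇑g₂ '' (⇑(g₂⁻¹ * g₁) '' Δ)) (⇑g₂ '' Δ) :=
        (Set.disjoint_image_iff g₂.injective).mpr hdis
      rwa [← Set.image_comp, ← Equiv.Perm.coe_mul, mul_inv_cancel_left] at h2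
  have hmemBx : ∀ x, x ∈ Bx x := fun x => ⟨a₀, ha₀, hgga x⟩
  have hBeq : ∀ x y, y ∈ Bx x → Bx y = Bx x := by
    intro x y hy
    rcases hEoD _ (hggG y) _ (hggG x) with h | h
    · exact h
    · exact absurd hy (Set.disjoint_left.mp h (hmemBx y))
  have hBimg : ∀ h ∈ G, ∀ x, ⇑h '' Bx x = Bx (h x) := by
    intro h hh x
    have h1 : ⇑h '' Bx x = ⇑(h * gg x) '' Δ := by
      show ⇑h '' (⇑(gg x) '' Δ) = ⇑(h * gg x) '' Δ
      rw [← Set.image_comp, ← Equiv.Perm.coe_mul]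
    have hmem2 : h x ∈ ⇑(h * gg x) '' Δ :=
      ⟨a₀, ha₀, by rw [Equiv.Perm.mul_apply, hgga]⟩
    rcases hEoD _ (hclosed _ hh _ (hggG x)) _ (hggG (h x)) with heq | hdis
    · rw [h1, heq]
    · exact absurd (hmemBx (h x)) (Set.disjoint_left.mp hdis hmem2)
  have hBΔ : Bx a₀ = Δ := by
    have h1 : ⇑(1 : Equiv.Perm Ω) '' Δ = Δ := by simp
    rcases hEoD _ (hggG a₀) _ hone with heq | hdis
    · show ⇑(gg a₀) '' Δ = Δ
      rw [heq, h1]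
    · rw [h1] at hdis
      exact absurd ha₀ (Set.disjoint_left.mp hdis (hmemBx a₀))
  have hcross : ∀ x z, z ∉ Bx x → ∀ u ∈ Bx x, mv x z u ≠ u := by
    intro x z hz u hu heq
    have hxz : x ≠ z := fun h => hz (h ▸ hmemBx x)
    have h1 : mv x z x = z := (hmv.2 x z hxz).1
    have h2 : u ∈ Bx z := by
      have himg := hBimg _ (hmvG x z) x
      rw [h1] at himg
      rw [← himg]
      exact ⟨u, hu, heq⟩
    have e1 : Bx u = Bx x := hBeq x u hu
    have e2 : Bx u = Bx z := hBeq z u h2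
    exact hz (by rw [e1.symm.trans e2]; exact hmemBx z)
  have hac₀ : a₀ ≠ c₀ := fun h => hc₀ (h ▸ ha₀)
  have hMc := my_card_moved hD hss hmv hac₀
  by_cases hall : ∀ z : Ω, mv a₀ c₀ z ≠ z
  · have huniv : {z | mv a₀ c₀ z ≠ z} = Set.univ := Set.eq_univ_of_forall hall
    rw [huniv, Set.ncard_univ, Nat.card_eq_fintype_card, hD.1] at hMc
    omega
  push_neg at hall
  obtain ⟨d, hd⟩ := hall
  have hcBa : c₀ ∉ Bx a₀ := by rw [hBΔ]; exact hc₀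
  have hdBa : d ∉ Bx a₀ := fun hmem => hcross a₀ c₀ hcBa d hmem hd
  have hdBc : d ∉ Bx c₀ := by
    intro hmem
    have h1 : mv a₀ c₀ c₀ = a₀ := (hmv.2 a₀ c₀ hac₀).2.1
    have himg := hBimg _ (hmvG a₀ c₀) c₀
    rw [h1] at himg
    exact hdBa (by rw [← himg]; exact ⟨d, hmem, hd⟩)
  have hfix : ∀ u ∈ Bx d, mv a₀ c₀ u = u := by
    intro u hu
    by_contra hmoved
    have hBud : Bx u = Bx d := hBeq d u hu
    have hua : u ≠ a₀ := by
      rintro rfl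
      exact hdBa (by rw [hBeq d u hu]; exact hmemBx d)
    have huc : u ≠ c₀ := by
      rintro rfl
      exact hdBc (by rw [hBeq d u hu]; exact hmemBx d)
    have hline : ∃ L ∈ B, a₀ ∈ L ∧ c₀ ∈ L ∧ u ∈ L := by
      by_contra hno
      push_neg at hno
      exact hmoved ((hmv.2 a₀ c₀ hac₀).2.2.2 u hua huc
        (fun L hL hcon => hno L hL hcon.1 hcon.2.1 hcon.2.2))
    obtain ⟨L, hL, haL, hcL, huL⟩ := hline
    obtain ⟨w, hwa, hwc, hwu, hLeq⟩ :=
      my_exists_fourth (hD.2.1 L hL) haL hcL huL hac₀ hua huc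
    have hmw : mv a₀ c₀ u = w := (hmv.2 a₀ c₀ hac₀).2.2.1 u w (hLeq ▸ hL)
    have hBwu : Bx w ≠ Bx u := by
      intro heq
      have hwBu : w ∈ Bx u := by rw [← heq]; exact hmemBx w
      have hswap : mv u a₀ w = c₀ := by
        apply (hmv.2 u a₀ hua).2.2.1
        have hset : ({u, a₀, w, c₀} : Finset Ω) = L := by
          rw [hLeq]; ext v
          simp only [Finset.mem_insert, Finset.mem_singleton]
          tauto
        rw [hset]; exact hL
      have huim : mv u a₀ u = a₀ := (hmv.2 u a₀ hua).1
      have himg := hBimg _ (hmvG u a₀) u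
      rw [huim] at himg
      have : c₀ ∈ Bx a₀ := by rw [← himg]; exact ⟨w, hwBu, hswap⟩
      rw [hBΔ] at this
      exact hc₀ this
    have himg2 := hBimg _ (hmvG a₀ c₀) u
    rw [hmw] at himg2
    have hdm : mv a₀ c₀ d ∈ Bx w := by
      rw [← himg2]; exact ⟨d, by rw [hBud]; exact hmemBx d, rfl⟩
    rw [hd] at hdm
    exact hBwu ((hBeq w d hdm).symm.trans hBud.symm)
  have hcardB : (Bx d).ncard = Δ.ncard := by
    show (⇑(gg d) '' Δ).ncard = Δ.ncard
    exact Set.ncard_image_of_injective _ (gg d).injective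
  have hsle : 2 ≤ Δ.ncard := by
    rw [show (2 : ℕ) = 1 + 1 by rfl]
    refine Nat.succ_le_of_lt ?_
    rw [Set.one_lt_ncard (Set.toFinite _)]
    exact ⟨a₀, ha₀, b₀, hb₀, hab₀⟩
  have hdisj : Disjoint {z | mv a₀ c₀ z ≠ z} (Bx d) := by
    rw [Set.disjoint_left]
    intro z hz hzB
    exact hz (hfix z hzB)
  have hineq1 : 2 * lam + 2 + Δ.ncard ≤ n := by
    have hunion : ({z | mv a₀ c₀ z ≠ z} ∪ Bx d).ncard = 2 * lam + 2 + Δ.ncard := by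
      rw [Set.ncard_union_eq hdisj (Set.toFinite _) (Set.toFinite _), hMc, hcardB]
    have hle : ({z | mv a₀ c₀ z ≠ z} ∪ Bx d).ncard ≤ n := by
      rw [← hD.1, ← Nat.card_eq_fintype_card, ← Set.ncard_univ]
      exact Set.ncard_le_ncard (Set.subset_univ _) Set.finite_univ
    omega
  obtain ⟨b', hb'B, hb'd⟩ : ∃ b' ∈ Bx d, b' ≠ d := by
    have h2 : 1 < (Bx d).ncard := by omega
    obtain ⟨b', hb'⟩ := Set.exists_ne_of_one_lt_ncard h2 d
    exact ⟨b', hb'.1, hb'.2⟩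
  have hdb' : d ≠ b' := hb'd.symm
  have hsub2 : (Set.univ \ Bx d) ∪ {d, b'} ⊆ {z | mv d b' z ≠ z} := by
    intro z hz
    rcases hz with ⟨-, hzB⟩ | hz
    · have hmvb' : mv d z b' ≠ b' := hcross d z hzB b' hb'B
      have hzd : z ≠ d := fun h => hzB (h ▸ hmemBx d)
      have hzb' : z ≠ b' := fun h => hzB (h ▸ hb'B)
      have hline : ∃ L ∈ B, d ∈ L ∧ z ∈ L ∧ b' ∈ L := by
        by_contra hno
        push_neg at hno
        exact hmvb' ((hmv.2 d z hzd.symm).2.2.2 b' hb'd hzb'.symm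
          (fun L hL hcon => hno L hL hcon.1 hcon.2.1 hcon.2.2))
      obtain ⟨L, hL, hdL, hzL, hb'L⟩ := hline
      obtain ⟨w, hw1, hw2, hw3, hLeq⟩ :=
        my_exists_fourth (hD.2.1 L hL) hdL hb'L hzL hdb' hzd hzb'
      have hval : mv d b' z = w := (hmv.2 d b' hdb').2.2.1 z w (hLeq ▸ hL)
      show mv d b' z ≠ z
      rw [hval]; exact hw3
    · rcases hz with rfl | rfl
      · show mv z b' z ≠ z
        rw [(hmv.2 z b' hdb').1]; exact hb'd
      · show mv d z z ≠ z
        rw [(hmv.2 d z hdb').2.1]; exact hdb'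
  have hdisj2 : Disjoint (Set.univ \ Bx d) ({d, b'} : Set Ω) := by
    rw [Set.disjoint_right]
    rintro z (rfl | rfl)
    · exact fun h => h.2 (hmemBx z)
    · exact fun h => h.2 hb'B
  have hineq2 : (Set.univ \ Bx d).ncard + 2 ≤ 2 * lam + 2 := by
    have hle := Set.ncard_le_ncard hsub2 (Set.toFinite _)
    rw [Set.ncard_union_eq hdisj2 (Set.toFinite _) (Set.toFinite _), Set.ncard_pair hdb',
      my_card_moved hD hss hmv hdb'] at hle
    exact hle
  have hdiffcard : (Set.univ \ Bx d).ncard = n - Δ.ncard := by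
    rw [Set.ncard_diff (Set.subset_univ _) (Set.toFinite _), Set.ncard_univ,
      Nat.card_eq_fintype_card, hD.1, hcardB]
  omega
end

section
/- Let D=(Ω,B) be a supersimple 2-(n,4,λ) design with n > 2λ+2, let C be the set of collinear triples of D, and let ∞ ∈ Ω. If (Ω,C) is a regular two-graph, then the hole-stabilizer π_∞(D) (a subgroup of Sym(Ω) fixing ∞) acts transitively on Ω∖{∞}. -/
open Equiv

variable {Ω : Type*}

section AuxHoleStab

variable [Fintype Ω] [DecidableEq Ω]

lemma card3' {u v x : Ω} (h1 : u ≠ v) (h2 : u ≠ x) (h3 : v ≠ x) :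
    ({u,v,x} : Finset Ω).card = 3 := by
  rw [Finset.card_insert_of_notMem (by simp [h1,h2]),
    Finset.card_insert_of_notMem (by simp [h3]), Finset.card_singleton]

lemma card4' {p1 p2 p3 p4 : Ω} (h12 : p1 ≠ p2) (h13 : p1 ≠ p3) (h14 : p1 ≠ p4)
    (h23 : p2 ≠ p3) (h24 : p2 ≠ p4) (h34 : p3 ≠ p4) :
    ({p1,p2,p3,p4} : Finset Ω).card = 4 := by
  rw [Finset.card_insert_of_notMem (by simp [h12,h13,h14]), card3' h23 h24 h34]

lemma triple_mem_C {B : Set (Finset Ω)} {u v x : Ω} (h1 : u ≠ v) (h2 : u ≠ x) (h3 : v ≠ x)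
    {L : Finset Ω} (hL : L ∈ B) (hu : u ∈ L) (hv : v ∈ L) (hx : x ∈ L) :
    ({u,v,x} : Finset Ω) ∈ collinearTriples B :=
  ⟨card3' h1 h2 h3, L, hL, by intro z hz; simp at hz; rcases hz with rfl|rfl|rfl <;> assumption⟩

/-- count of triples in C through a pair -/
lemma pair_count {C : Set (Finset Ω)} {μ : ℕ}
    (hμ : ∀ p : Finset Ω, p.card = 2 → {t ∈ C | p ⊆ t}.ncard = μ)
    (hc3 : ∀ t ∈ C, t.card = 3) {u v : Ω} (huv : u ≠ v) :
    {x : Ω | x ≠ u ∧ x ≠ v ∧ ({u,v,x} : Finset Ω) ∈ C}.ncard = μ := by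
  have hp2 : ({u,v} : Finset Ω).card = 2 := by
    rw [Finset.card_insert_of_notMem (by simp [huv]), Finset.card_singleton]
  rw [← hμ {u,v} hp2]
  have himg : {t ∈ C | ({u,v} : Finset Ω) ⊆ t} =
      (fun x => ({u,v,x} : Finset Ω)) '' {x : Ω | x ≠ u ∧ x ≠ v ∧ ({u,v,x} : Finset Ω) ∈ C} := by
    ext t
    constructor
    · rintro ⟨htC, hsub⟩
      have ht3 : t.card = 3 := hc3 t htC
      have hsd : (t \ ({u,v} : Finset Ω)).card = 1 := by
        rw [Finset.card_sdiff_of_subset hsub, ht3, hp2]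
      obtain ⟨x, hx⟩ := Finset.card_eq_one.mp hsd
      have hxmem : x ∈ t \ ({u,v} : Finset Ω) := hx ▸ Finset.mem_singleton_self x
      rw [Finset.mem_sdiff, Finset.mem_insert, Finset.mem_singleton] at hxmem
      push_neg at hxmem
      have ht : t = ({u,v,x} : Finset Ω) := by
        have := Finset.union_sdiff_of_subset hsub
        rw [hx] at this
        rw [← this]
        ext z; simp
      exact ⟨x, ⟨hxmem.2.1, hxmem.2.2, ht ▸ htC⟩, ht.symm⟩
    · rintro ⟨x, ⟨hxu, hxv, hxC⟩, rfl⟩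
      exact ⟨hxC, by intro z hz; simp at hz ⊢; tauto⟩
  rw [himg, Set.ncard_image_of_injOn]
  rintro x ⟨hxu, hxv, -⟩ y ⟨hyu, hyv, -⟩ hxy
  have hxy' : ({u,v,x} : Finset Ω) = ({u,v,y} : Finset Ω) := hxy
  have : y ∈ ({u,v,x} : Finset Ω) := by rw [hxy']; simp
  simp at this
  tauto

lemma mu_le_two_lam {B : Set (Finset Ω)} {lam μ : ℕ}
    (hline4 : ∀ L ∈ B, L.card = 4)
    (hlam : ∀ p : Finset Ω, p.card = 2 → {L ∈ B | p ⊆ L}.ncard = lam)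
    (hμ : ∀ p : Finset Ω, p.card = 2 →
      {t ∈ collinearTriples B | p ⊆ t}.ncard = μ)
    (hc3 : ∀ t ∈ collinearTriples B, t.card = 3)
    {u v : Ω} (huv : u ≠ v) : μ ≤ 2 * lam := by
  classical
  have hp2 : ({u,v} : Finset Ω).card = 2 := by
    rw [Finset.card_insert_of_notMem (by simp [huv]), Finset.card_singleton]
  set S : Set Ω := {x : Ω | x ≠ u ∧ x ≠ v ∧ ({u,v,x} : Finset Ω) ∈ collinearTriples B} with hS
  have hSμ : S.ncard = μ := pair_count hμ hc3 huv
  set TL : Set (Finset Ω) := {L ∈ B | ({u,v} : Finset Ω) ⊆ L} with hTL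
  have hTLfin : TL.Finite := Set.toFinite _
  have hTLcard : hTLfin.toFinset.card = lam := by
    rw [← Set.ncard_eq_toFinset_card TL hTLfin, hlam _ hp2]
  have hsub : S ⊆ ↑(hTLfin.toFinset.biUnion (fun L => L \ ({u,v} : Finset Ω))) := by
    rintro x ⟨hxu, hxv, h3, L, hLB, hLsub⟩
    simp only [Finset.coe_biUnion, Set.mem_iUnion, Finset.mem_coe, Finset.mem_sdiff]
    refine ⟨L, ?_, ?_, ?_⟩
    · simp [Set.Finite.mem_toFinset, hTL]
      exact ⟨hLB, fun z hz => hLsub (by simp at hz ⊢; tauto)⟩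
    · exact hLsub (by simp)
    · simp [hxu, hxv]
  calc μ = S.ncard := hSμ.symm
    _ ≤ (↑(hTLfin.toFinset.biUnion (fun L => L \ ({u,v} : Finset Ω))) : Set Ω).ncard :=
        Set.ncard_le_ncard hsub (Set.toFinite _)
    _ = (hTLfin.toFinset.biUnion (fun L => L \ ({u,v} : Finset Ω))).card :=
        Set.ncard_coe_finset _
    _ ≤ ∑ L ∈ hTLfin.toFinset, (L \ ({u,v} : Finset Ω)).card := Finset.card_biUnion_le
    _ ≤ ∑ L ∈ hTLfin.toFinset, 2 := by
        apply Finset.sum_le_sum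
        intro L hL
        rw [Set.Finite.mem_toFinset] at hL
        rw [Finset.card_sdiff_of_subset hL.2, hline4 L hL.1, hp2]
    _ = lam * 2 := by rw [Finset.sum_const, hTLcard, smul_eq_mul]
    _ = 2 * lam := by ring

lemma subset_four {p1 p2 p3 p4 : Ω} (h12 : p1 ≠ p2) (h13 : p1 ≠ p3) (h14 : p1 ≠ p4)
    (h23 : p2 ≠ p3) (h24 : p2 ≠ p4) (h34 : p3 ≠ p4)
    {t : Finset Ω} (ht3 : t.card = 3) (hsub : t ⊆ ({p1,p2,p3,p4} : Finset Ω)) :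
    t = ({p2,p3,p4} : Finset Ω) ∨ t = ({p1,p3,p4} : Finset Ω) ∨
    t = ({p1,p2,p4} : Finset Ω) ∨ t = ({p1,p2,p3} : Finset Ω) := by
  set q : Finset Ω := {p1,p2,p3,p4} with hq
  have hq4 : q.card = 4 := card4' h12 h13 h14 h23 h24 h34
  have hsd : (q \ t).card = 1 := by rw [Finset.card_sdiff_of_subset hsub, hq4, ht3]
  obtain ⟨e, he⟩ := Finset.card_eq_one.mp hsd
  have ht : t = q \ {e} := by
    rw [← he, Finset.sdiff_sdiff_eq_self hsub]
  have heq : e ∈ q := (Finset.mem_sdiff.mp (he ▸ Finset.mem_singleton_self e)).1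
  rw [hq] at heq; simp only [Finset.mem_insert, Finset.mem_singleton] at heq
  rcases heq with rfl|rfl|rfl|rfl
  · left; rw [ht]; ext z; simp [hq]; constructor
    · rintro ⟨h1|h1|h1|h1, h2⟩ <;> tauto
    · rintro (rfl|rfl|rfl) <;> exact ⟨by tauto, by tauto⟩
  · right; left; rw [ht]; ext z; simp [hq]; constructor
    · rintro ⟨h1|h1|h1|h1, h2⟩ <;> tauto
    · rintro (rfl|rfl|rfl) <;> exact ⟨by tauto, by tauto⟩
  · right; right; left; rw [ht]; ext z; simp [hq]; constructor
    · rintro ⟨h1|h1|h1|h1, h2⟩ <;> tauto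
    · rintro (rfl|rfl|rfl) <;> exact ⟨by tauto, by tauto⟩
  · right; right; right; rw [ht]; ext z; simp [hq]; constructor
    · rintro ⟨h1|h1|h1|h1, h2⟩ <;> tauto
    · rintro (rfl|rfl|rfl) <;> exact ⟨by tauto, by tauto⟩

lemma ncard3_contra {C : Set (Finset Ω)} {q s1 s2 s3 : Finset Ω}
    (h4q : {t ∈ C | t ⊆ q}.ncard = 0 ∨ {t ∈ C | t ⊆ q}.ncard = 2 ∨ {t ∈ C | t ⊆ q}.ncard = 4)
    (hset : {t ∈ C | t ⊆ q} = {s1, s2, s3})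
    (d12 : s1 ≠ s2) (d13 : s1 ≠ s3) (d23 : s2 ≠ s3) : False := by
  have h3 : ({s1, s2, s3} : Set (Finset Ω)).ncard = 3 :=
    Set.ncard_eq_three.mpr ⟨s1, s2, s3, d12, d13, d23, rfl⟩
  rw [hset, h3] at h4q
  omega

lemma exists_c {B : Set (Finset Ω)} {n lam μ : ℕ}
    (hcardΩ : Fintype.card Ω = n)
    (hline4 : ∀ L ∈ B, L.card = 4)
    (hlam : ∀ p : Finset Ω, p.card = 2 → {L ∈ B | p ⊆ L}.ncard = lam)
    (hn : 2 * lam + 2 < n)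
    (hc3 : ∀ t ∈ collinearTriples B, t.card = 3)
    (hμ : ∀ p : Finset Ω, p.card = 2 → {t ∈ collinearTriples B | p ⊆ t}.ncard = μ)
    (h4 : ∀ q : Finset Ω, q.card = 4 →
      {t ∈ collinearTriples B | t ⊆ q}.ncard = 0 ∨
      {t ∈ collinearTriples B | t ⊆ q}.ncard = 2 ∨
      {t ∈ collinearTriples B | t ⊆ q}.ncard = 4)
    {inf a b : Ω} (ha : a ≠ inf) (hb : b ≠ inf) (hab : a ≠ b)
    (habC : ({inf, a, b} : Finset Ω) ∈ collinearTriples B) :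
    ∃ c, c ≠ inf ∧ c ≠ a ∧ c ≠ b ∧ ({inf, a, c} : Finset Ω) ∉ collinearTriples B ∧
      ({inf, b, c} : Finset Ω) ∉ collinearTriples B := by
  classical
  set C := collinearTriples B with hC
  by_contra hno
  push_neg at hno
  -- hno : ∀ c, c ≠ inf → c ≠ a → c ≠ b → {inf,a,c} ∉ C → {inf,b,c} ∈ C
  -- parity claims
  have claim1 : ∀ x, x ≠ inf → x ≠ a → x ≠ b → ({inf,a,x} : Finset Ω) ∈ C →
      ({inf,b,x} : Finset Ω) ∈ C → ({a,b,x} : Finset Ω) ∈ C := by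
    intro x hxi hxa hxb hA hB
    by_contra hT
    refine ncard3_contra (h4 {inf,a,b,x}
      (card4' ha.symm hb.symm (Ne.symm hxi) hab hxa.symm hxb.symm)) (s1 := ({inf,a,b} : Finset Ω))
      (s2 := ({inf,a,x} : Finset Ω)) (s3 := ({inf,b,x} : Finset Ω)) ?_ ?_ ?_ ?_
    · ext t
      constructor
      · rintro ⟨htC, htq⟩
        rcases subset_four ha.symm hb.symm (Ne.symm hxi) hab hxa.symm hxb.symm
          (hc3 t htC) htq with rfl|rfl|rfl|rfl
        · exact absurd htC hT
        · simp
        · simp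
        · simp
      · rintro (rfl|rfl|rfl)
        · exact ⟨habC, by intro z hz; simp at hz ⊢; tauto⟩
        · exact ⟨hA, by intro z hz; simp at hz ⊢; tauto⟩
        · exact ⟨hB, by intro z hz; simp at hz ⊢; tauto⟩
    · intro h
      have : x ∈ ({inf,a,b} : Finset Ω) := by rw [h]; simp
      simp at this; tauto
    · intro h
      have : x ∈ ({inf,a,b} : Finset Ω) := by rw [h]; simp
      simp at this; tauto
    · intro h
      have : b ∈ ({inf,a,x} : Finset Ω) := by rw [h]; simp
      simp at this; tauto
  have claim2 : ∀ x, x ≠ inf → x ≠ a → x ≠ b → ({a,b,x} : Finset Ω) ∈ C →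
      ({inf,a,x} : Finset Ω) ∈ C → ({inf,b,x} : Finset Ω) ∈ C := by
    intro x hxi hxa hxb hT hA
    by_contra hB
    refine ncard3_contra (h4 {inf,a,b,x}
      (card4' ha.symm hb.symm (Ne.symm hxi) hab hxa.symm hxb.symm)) (s1 := ({inf,a,b} : Finset Ω))
      (s2 := ({inf,a,x} : Finset Ω)) (s3 := ({a,b,x} : Finset Ω)) ?_ ?_ ?_ ?_
    · ext t
      constructor
      · rintro ⟨htC, htq⟩
        rcases subset_four ha.symm hb.symm (Ne.symm hxi) hab hxa.symm hxb.symm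
          (hc3 t htC) htq with rfl|rfl|rfl|rfl
        · simp
        · exact absurd htC hB
        · simp
        · simp
      · rintro (rfl|rfl|rfl)
        · exact ⟨habC, by intro z hz; simp at hz ⊢; tauto⟩
        · exact ⟨hA, by intro z hz; simp at hz ⊢; tauto⟩
        · exact ⟨hT, by intro z hz; simp at hz ⊢; tauto⟩
    · intro h
      have : x ∈ ({inf,a,b} : Finset Ω) := by rw [h]; simp
      simp at this; tauto
    · intro h
      have : inf ∈ ({a,b,x} : Finset Ω) := by rw [← h]; simp
      simp at this
      rcases this with h'|h'|h'
      · exact ha h'.symm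
      · exact hb h'.symm
      · exact hxi h'.symm
    · intro h
      have : inf ∈ ({a,b,x} : Finset Ω) := by rw [← h]; simp
      simp at this
      rcases this with h'|h'|h'
      · exact ha h'.symm
      · exact hb h'.symm
      · exact hxi h'.symm
  have claim3 : ∀ x, x ≠ inf → x ≠ a → x ≠ b → ({a,b,x} : Finset Ω) ∈ C →
      ({inf,b,x} : Finset Ω) ∈ C → ({inf,a,x} : Finset Ω) ∈ C := by
    intro x hxi hxa hxb hT hB
    by_contra hA
    refine ncard3_contra (h4 {inf,a,b,x}
      (card4' ha.symm hb.symm (Ne.symm hxi) hab hxa.symm hxb.symm)) (s1 := ({inf,a,b} : Finset Ω))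
      (s2 := ({inf,b,x} : Finset Ω)) (s3 := ({a,b,x} : Finset Ω)) ?_ ?_ ?_ ?_
    · ext t
      constructor
      · rintro ⟨htC, htq⟩
        rcases subset_four ha.symm hb.symm (Ne.symm hxi) hab hxa.symm hxb.symm
          (hc3 t htC) htq with rfl|rfl|rfl|rfl
        · simp
        · simp
        · exact absurd htC hA
        · simp
      · rintro (rfl|rfl|rfl)
        · exact ⟨habC, by intro z hz; simp at hz ⊢; tauto⟩
        · exact ⟨hB, by intro z hz; simp at hz ⊢; tauto⟩
        · exact ⟨hT, by intro z hz; simp at hz ⊢; tauto⟩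
    · intro h
      have : x ∈ ({inf,a,b} : Finset Ω) := by rw [h]; simp
      simp at this; tauto
    · intro h
      have : inf ∈ ({a,b,x} : Finset Ω) := by rw [← h]; simp
      simp at this
      rcases this with h'|h'|h'
      · exact ha h'.symm
      · exact hb h'.symm
      · exact hxi h'.symm
    · intro h
      have : inf ∈ ({a,b,x} : Finset Ω) := by rw [← h]; simp
      simp at this
      rcases this with h'|h'|h'
      · exact ha h'.symm
      · exact hb h'.symm
      · exact hxi h'.symm
  -- the three point sets
  set bigA : Set Ω := {x : Ω | x ≠ inf ∧ x ≠ a ∧ ({inf,a,x} : Finset Ω) ∈ C} with hbigA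
  set bigB : Set Ω := {x : Ω | x ≠ inf ∧ x ≠ b ∧ ({inf,b,x} : Finset Ω) ∈ C} with hbigB
  set bigT : Set Ω := {x : Ω | x ≠ a ∧ x ≠ b ∧ ({a,b,x} : Finset Ω) ∈ C} with hbigT
  have hbigAc : bigA.ncard = μ := pair_count hμ hc3 ha.symm
  have hbigBc : bigB.ncard = μ := pair_count hμ hc3 hb.symm
  have hbigTc : bigT.ncard = μ := pair_count hμ hc3 hab
  have hbamem : b ∈ bigA := ⟨hb, hab.symm, habC⟩
  have heqba : ({inf,b,a} : Finset Ω) = ({inf,a,b} : Finset Ω) := by ext z; simp; tauto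
  have heqab : ({a,b,inf} : Finset Ω) = ({inf,a,b} : Finset Ω) := by ext z; simp; tauto
  have habmem : a ∈ bigB := ⟨ha, hab, by rw [heqba]; exact habC⟩
  have hinfmem : inf ∈ bigT := ⟨ha.symm, hb.symm, by rw [heqab]; exact habC⟩
  set Sa : Set Ω := bigA \ {b} with hSa
  set Sb : Set Ω := bigB \ {a} with hSb
  set St : Set Ω := bigT \ {inf} with hSt
  have hSac : Sa.ncard = μ - 1 := by
    rw [hSa, Set.ncard_diff_singleton_of_mem hbamem, hbigAc]
  have hSbc : Sb.ncard = μ - 1 := by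
    rw [hSb, Set.ncard_diff_singleton_of_mem habmem, hbigBc]
  have hStc : St.ncard = μ - 1 := by
    rw [hSt, Set.ncard_diff_singleton_of_mem hinfmem, hbigTc]
  have hABT : Sa ∩ Sb = St := by
    ext x
    constructor
    · rintro ⟨⟨⟨hxi, hxa, hA⟩, hxb⟩, ⟨⟨-, hxb', hB⟩, -⟩⟩
      simp only [Set.mem_singleton_iff] at hxb
      exact ⟨⟨hxa, hxb', claim1 x hxi hxa hxb' hA hB⟩, hxi⟩
    · rintro ⟨⟨hxa, hxb, hT⟩, hxi⟩
      simp only [Set.mem_singleton_iff] at hxi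
      have hAB : ({inf,a,x} : Finset Ω) ∈ C ∧ ({inf,b,x} : Finset Ω) ∈ C := by
        by_cases hA : ({inf,a,x} : Finset Ω) ∈ C
        · exact ⟨hA, claim2 x hxi hxa hxb hT hA⟩
        · have hB := hno x hxi hxa hxb hA
          exact ⟨claim3 x hxi hxa hxb hT hB, hB⟩
      exact ⟨⟨⟨hxi, hxa, hAB.1⟩, by simp [hxb]⟩, ⟨⟨hxi, hxb, hAB.2⟩, by simp [hxa]⟩⟩
  have hSaEq : Sa ∩ Sb = Sa := by
    apply Set.eq_of_subset_of_ncard_le Set.inter_subset_left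
    rw [hSac, hABT, hStc]
  have hSbEq : Sa ∩ Sb = Sb := by
    apply Set.eq_of_subset_of_ncard_le Set.inter_subset_right
    rw [hSbc, hABT, hStc]
  have hSab : Sa = Sb := by rw [← hSaEq, hSbEq]
  set X : Set Ω := {x : Ω | x ≠ inf ∧ x ≠ a ∧ x ≠ b} with hX
  have hXSa : X = Sa := by
    apply Set.Subset.antisymm
    · rintro x ⟨hxi, hxa, hxb⟩
      by_cases hA : ({inf,a,x} : Finset Ω) ∈ C
      · exact ⟨⟨hxi, hxa, hA⟩, by simp [hxb]⟩
      · have hB := hno x hxi hxa hxb hA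
        rw [hSab]
        exact ⟨⟨hxi, hxb, hB⟩, by simp [hxa]⟩
    · rintro x ⟨⟨hxi, hxa, -⟩, hxb⟩
      simp only [Set.mem_singleton_iff] at hxb
      exact ⟨hxi, hxa, hxb⟩
  have hXc : X.ncard = n - 3 := by
    have hXeq : X = Set.univ \ ({inf, a, b} : Set Ω) := by
      ext z; simp [hX]
    have h3 : ({inf, a, b} : Set Ω).ncard = 3 :=
      Set.ncard_eq_three.mpr ⟨inf, a, b, Ne.symm ha, Ne.symm hb, hab, rfl⟩
    rw [hXeq, Set.ncard_diff (Set.subset_univ _) (Set.toFinite _), Set.ncard_univ,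
      Nat.card_eq_fintype_card, hcardΩ, h3]
  have hμle : μ ≤ 2 * lam := mu_le_two_lam hline4 hlam hμ hc3 ha.symm
  have hμpos : 1 ≤ μ := by
    rw [← hbigAc]
    exact (Set.ncard_pos (Set.toFinite _)).mpr ⟨b, hbamem⟩
  rw [hXSa, hSac] at hXc
  omega


lemma mv_fix {B : Set (Finset Ω)} {mv : Ω → Ω → Equiv.Perm Ω} (hmv : IsElemMoveFn B mv)
    {u v x : Ω} (huv : u ≠ v) (hxu : x ≠ u) (hxv : x ≠ v)
    (h : ({u,v,x} : Finset Ω) ∉ collinearTriples B) : mv u v x = x := by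
  apply (hmv.2 u v huv).2.2.2 x hxu hxv
  intro L hL hmem
  exact h (triple_mem_C huv hxu.symm hxv.symm hL hmem.1 hmem.2.1 hmem.2.2)

end AuxHoleStab

/-- Theorem A(b): if the collinear triples of a supersimple
`2-(n,4,λ)` design with `n > 2λ+2` form a regular two-graph, then the hole stabilizer
`π_∞(D)` is transitive on `Ω \ {∞}`. -/
theorem holeStabilizer_transitive [Fintype Ω] [DecidableEq Ω]
    {B : Set (Finset Ω)} {n lam : ℕ}
    (hD : IsDesign B n lam) (hss : Supersimple B) (hn : 2 * lam + 2 < n)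
    (mv : Ω → Ω → Equiv.Perm Ω) (hmv : IsElemMoveFn B mv) (inf : Ω)
    (hRT : IsRegularTwoGraph (collinearTriples B)) :
    SetTransitiveOn (holeStabilizer mv inf) {x : Ω | x ≠ inf} := by
  classical
  obtain ⟨hcardΩ, hline4, hlam⟩ := hD
  obtain ⟨hc3, ⟨μ, hμ⟩, h4⟩ := hRT
  intro x hx y hy
  simp only [Set.mem_setOf_eq] at hx hy
  by_cases hxy : x = y
  · refine ⟨moveSeq mv inf ([] ++ [inf]), ⟨[], rfl⟩, ?_⟩
    simp only [List.nil_append, moveSeq, hmv.1, mul_one, one_mul]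
    simp [hxy]
  · by_cases hcol : ({inf, x, y} : Finset Ω) ∈ collinearTriples B
    · -- collinear case: route through an intermediate point c
      obtain ⟨c, hci, hcx, hcy, hnAC, hnBC⟩ :=
        exists_c hcardΩ hline4 hlam hn hc3 hμ h4 hx hy hxy hcol
      refine ⟨moveSeq mv inf ([x, c, inf, c, y] ++ [inf]), ⟨[x, c, inf, c, y], rfl⟩, ?_⟩
      have e1 : mv inf x x = inf := (hmv.2 inf x (Ne.symm hx)).2.1
      have e2 : mv x c inf = inf := by
        apply mv_fix hmv (Ne.symm hcx) (Ne.symm hx) (Ne.symm hci)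
        intro hmem
        apply hnAC
        have : ({x, c, inf} : Finset Ω) = ({inf, x, c} : Finset Ω) := by ext z; simp; tauto
        rwa [this] at hmem
      have e3 : mv c inf inf = c := (hmv.2 c inf hci).2.1
      have e4 : mv inf c c = inf := (hmv.2 inf c (Ne.symm hci)).2.1
      have e5 : mv c y inf = inf := by
        apply mv_fix hmv hcy (Ne.symm hci) (Ne.symm hy)
        intro hmem
        apply hnBC
        have : ({c, y, inf} : Finset Ω) = ({inf, y, c} : Finset Ω) := by ext z; simp; tauto
        rwa [this] at hmem
      have e6 : mv y inf inf = y := (hmv.2 y inf hy).2.1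
      show (moveSeq mv inf [x, c, inf, c, y, inf]) x = y
      simp only [moveSeq, one_mul, Equiv.Perm.mul_apply]
      rw [e1, e2, e3, e4, e5, e6]
    · -- non-collinear case: [inf, x, y, inf] works
      refine ⟨moveSeq mv inf ([x, y] ++ [inf]), ⟨[x, y], rfl⟩, ?_⟩
      have e1 : mv inf x x = inf := (hmv.2 inf x (Ne.symm hx)).2.1
      have e2 : mv x y inf = inf := by
        apply mv_fix hmv hxy (Ne.symm hx) (Ne.symm hy)
        intro hmem
        apply hcol
        have : ({x, y, inf} : Finset Ω) = ({inf, x, y} : Finset Ω) := by ext z; simp; tauto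
        rwa [this] at hmem
      have e3 : mv y inf inf = y := (hmv.2 y inf hy).2.1
      show (moveSeq mv inf [x, y, inf]) x = y
      simp only [moveSeq, one_mul, Equiv.Perm.mul_apply]
      rw [e1, e2, e3]
end

section
/- Let D=(Ω,B) be a supersimple 2-(n,4,λ) design, fix ∞ ∈ Ω, and let G := L_∞(D). The following are equivalent: (i) G is closed under composition (so G is a subgroup of Sym(Ω)); (ii) G = L(D) and G equals the subgroup of Sym(Ω) generated by all elementary moves [a,b] (a,b ∈ Ω); (iii) L(D) = L_x(D) for every x ∈ Ω. Furthermore, if these conditions hold, then G acts transitively on Ω and the stabilizer of ∞ in G equals π_∞(D). -/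
open Equiv

variable {Ω : Type*}

section ConwayAux

variable [Fintype Ω] [DecidableEq Ω] {B : Set (Finset Ω)} {n lam : ℕ}
  {mv : Ω → Ω → Equiv.Perm Ω}

private lemma fourth_point' (hD : IsDesign B n lam) {L : Finset Ω} (hL : L ∈ B)
    {a b x : Ω} (hab : a ≠ b) (hxa : x ≠ a) (hxb : x ≠ b)
    (ha : a ∈ L) (hb : b ∈ L) (hx : x ∈ L) :
    ∃ w, ({a, b, x, w} : Finset Ω) = L := by
  have hcard := hD.2.1 L hL
  have hsub : ({a, b, x} : Finset Ω) ⊆ L := by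
    intro z hz
    simp only [Finset.mem_insert, Finset.mem_singleton] at hz
    rcases hz with rfl | rfl | rfl <;> assumption
  have h3 : ({a, b, x} : Finset Ω).card = 3 := by
    rw [Finset.card_insert_of_notMem (by simp [hab, hxa.symm]),
      Finset.card_insert_of_notMem (by simp [hxb.symm]), Finset.card_singleton]
  have h1 : (L \ {a, b, x}).card = 1 := by
    rw [Finset.card_sdiff_of_subset hsub, hcard, h3]
  obtain ⟨w, hw⟩ := Finset.card_eq_one.mp h1
  refine ⟨w, ?_⟩
  have hu : ({a, b, x} : Finset Ω) ∪ (L \ {a, b, x}) = L :=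
    Finset.union_sdiff_of_subset hsub
  rw [hw] at hu
  rw [← hu]
  ext z
  simp only [Finset.mem_insert, Finset.mem_union, Finset.mem_singleton]
  tauto

private lemma mv_self' (hmv : IsElemMoveFn B mv) (a b : Ω) : mv a b a = b := by
  rcases eq_or_ne a b with rfl | h
  · rw [hmv.1]; rfl
  · exact (hmv.2 a b h).1

private lemma mv_invol' (hD : IsDesign B n lam) (hmv : IsElemMoveFn B mv) (a b : Ω) :
    mv a b * mv a b = 1 := by
  rcases eq_or_ne a b with rfl | h
  · rw [hmv.1]; exact one_mul 1
  · obtain ⟨h1, h2, h3, h4⟩ := hmv.2 a b h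
    ext x
    simp only [Equiv.Perm.mul_apply, Equiv.Perm.one_apply]
    rcases eq_or_ne x a with rfl | hxa
    · rw [h1, h2]
    rcases eq_or_ne x b with rfl | hxb
    · rw [h2, h1]
    by_cases hline : ∃ L ∈ B, a ∈ L ∧ b ∈ L ∧ x ∈ L
    · obtain ⟨L, hL, ha, hb, hx⟩ := hline
      obtain ⟨w, hw⟩ := fourth_point' hD hL h hxa hxb ha hb hx
      have hBw : ({a, b, x, w} : Finset Ω) ∈ B := hw ▸ hL
      have hBw' : ({a, b, w, x} : Finset Ω) ∈ B := by
        have he : ({a, b, w, x} : Finset Ω) = {a, b, x, w} := by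
          ext z
          simp only [Finset.mem_insert, Finset.mem_singleton]
          tauto
        rw [he]; exact hBw
      rw [h3 x w hBw, h3 w x hBw']
    · have hfix := h4 x hxa hxb fun L hL hc => hline ⟨L, hL, hc⟩
      rw [hfix, hfix]

private lemma mv_symm' (hD : IsDesign B n lam) (hmv : IsElemMoveFn B mv) (a b : Ω) :
    mv a b = mv b a := by
  rcases eq_or_ne a b with rfl | h
  · rfl
  · obtain ⟨h1, h2, h3, h4⟩ := hmv.2 a b h
    obtain ⟨g1, g2, g3, g4⟩ := hmv.2 b a h.symm
    ext x
    rcases eq_or_ne x a with rfl | hxa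
    · rw [h1, g2]
    rcases eq_or_ne x b with rfl | hxb
    · rw [h2, g1]
    by_cases hline : ∃ L ∈ B, a ∈ L ∧ b ∈ L ∧ x ∈ L
    · obtain ⟨L, hL, ha, hb, hx⟩ := hline
      obtain ⟨w, hw⟩ := fourth_point' hD hL h hxa hxb ha hb hx
      have hBw : ({a, b, x, w} : Finset Ω) ∈ B := hw ▸ hL
      have hBw' : ({b, a, x, w} : Finset Ω) ∈ B := by
        have he : ({b, a, x, w} : Finset Ω) = {a, b, x, w} := by
          ext z
          simp only [Finset.mem_insert, Finset.mem_singleton]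
          tauto
        rw [he]; exact hBw
      rw [h3 x w hBw, g3 x w hBw']
    · rw [h4 x hxa hxb (fun L hL hc => hline ⟨L, hL, hc⟩),
        g4 x hxb hxa (fun L hL hc => hline ⟨L, hL, hc.2.1, hc.1, hc.2.2⟩)]

private lemma mv_inv' (hD : IsDesign B n lam) (hmv : IsElemMoveFn B mv) (a b : Ω) :
    (mv a b)⁻¹ = mv a b :=
  inv_eq_of_mul_eq_one_right (mv_invol' hD hmv a b)

private lemma moveSeq_append' (l l' : List Ω) (a : Ω) :
    moveSeq mv a (l ++ l') = moveSeq mv (l.getLastD a) l' * moveSeq mv a l := by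
  induction l generalizing a with
  | nil => simp [moveSeq, List.getLastD]
  | cons b t ih =>
    rw [List.cons_append]
    show moveSeq mv b (t ++ l') * mv a b = _
    rw [ih b, List.getLastD_cons, mul_assoc]
    rfl

private lemma moveSeq_apply' (hmv : IsElemMoveFn B mv) (l : List Ω) (a : Ω) :
    moveSeq mv a l a = l.getLastD a := by
  induction l generalizing a with
  | nil => rfl
  | cons b t ih =>
    show (moveSeq mv b t * mv a b) a = _
    rw [Equiv.Perm.mul_apply, mv_self' hmv, ih b, List.getLastD_cons]

private lemma moveSeq_inv' (hD : IsDesign B n lam) (hmv : IsElemMoveFn B mv)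
    (l : List Ω) (a : Ω) :
    ∃ l', (moveSeq mv a l)⁻¹ = moveSeq mv (l.getLastD a) l' ∧
      l'.getLastD (l.getLastD a) = a := by
  induction l generalizing a with
  | nil => exact ⟨[], by simp [moveSeq, List.getLastD], rfl⟩
  | cons b t ih =>
    obtain ⟨l', h1, h2⟩ := ih b
    refine ⟨l' ++ [a], ?_, ?_⟩
    · rw [List.getLastD_cons]
      show (moveSeq mv b t * mv a b)⁻¹ = _
      rw [mul_inv_rev, h1, moveSeq_append', h2]
      congr 1
      rw [mv_inv' hD hmv, mv_symm' hD hmv]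
      exact (one_mul _).symm
    · rw [List.getLastD_cons, List.getLastD_concat]

private lemma eq_dropLast_concat_getLastD' {α : Type*} :
    ∀ (l : List α), l ≠ [] → ∀ d : α, l = l.dropLast ++ [l.getLastD d]
  | [], h, _ => absurd rfl h
  | [_], _, _ => rfl
  | a :: b :: t, _, d => by
    rw [List.getLastD_cons, List.dropLast_cons₂, List.cons_append]
    exact congrArg (a :: ·) (eq_dropLast_concat_getLastD' (b :: t) (by simp) a)

end ConwayAux

/-- Lemma 2.7: for a supersimple `2-(n,4,λ)` design and `∞ ∈ Ω`,
with `G = L_∞(D)`, the following are equivalent: (i) `G` is closed under composition;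
(ii) `G = L(D)` and `G` is the subgroup generated by all elementary moves;
(iii) `L(D) = L_x(D)` for all `x ∈ Ω`. Moreover if these hold then `G` is transitive
on `Ω` and the stabilizer of `∞` in `G` is `π_∞(D)`. -/
theorem conwayGroupoid_group_tfae [Fintype Ω] [DecidableEq Ω]
    {B : Set (Finset Ω)} {n lam : ℕ}
    (hD : IsDesign B n lam) (hss : Supersimple B)
    (mv : Ω → Ω → Equiv.Perm Ω) (hmv : IsElemMoveFn B mv) (inf : Ω) :
    ((∀ g ∈ ConwayGroupoid mv inf, ∀ h ∈ ConwayGroupoid mv inf,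
        g * h ∈ ConwayGroupoid mv inf) ↔
      (ConwayGroupoid mv inf = allMoveSeqs mv ∧
       ConwayGroupoid mv inf =
         ((Subgroup.closure {g : Equiv.Perm Ω | ∃ a b : Ω, g = mv a b} :
           Subgroup (Equiv.Perm Ω)) : Set (Equiv.Perm Ω)))) ∧
    ((∀ g ∈ ConwayGroupoid mv inf, ∀ h ∈ ConwayGroupoid mv inf,
        g * h ∈ ConwayGroupoid mv inf) ↔
      (∀ x : Ω, allMoveSeqs mv = ConwayGroupoid mv x)) ∧
    ((∀ g ∈ ConwayGroupoid mv inf, ∀ h ∈ ConwayGroupoid mv inf,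
        g * h ∈ ConwayGroupoid mv inf) →
      SetTransitiveOn (ConwayGroupoid mv inf) Set.univ ∧
      {g ∈ ConwayGroupoid mv inf | g inf = inf} = holeStabilizer mv inf) := by
  have hsq : ∀ a b : Ω, mv a b * mv a b = 1 := mv_invol' hD hmv
  have hmvMem : ∀ a b : Ω, mv a b ∈ allMoveSeqs mv := fun a b => ⟨a, [b], (one_mul _).symm⟩
  have hC3 : (∀ g ∈ ConwayGroupoid mv inf, ∀ h ∈ ConwayGroupoid mv inf,
      g * h ∈ ConwayGroupoid mv inf) →
      ∀ x : Ω, allMoveSeqs mv = ConwayGroupoid mv x := by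
    intro hcl
    have hsub : allMoveSeqs mv ⊆ ConwayGroupoid mv inf := by
      rintro g ⟨a, l, rfl⟩
      have h1 : moveSeq mv a l * mv inf a ∈ ConwayGroupoid mv inf := ⟨a :: l, rfl⟩
      have h2 : mv inf a ∈ ConwayGroupoid mv inf := ⟨[a], (one_mul _).symm⟩
      have h3 := hcl _ h1 _ h2
      rwa [mul_assoc, hsq, mul_one] at h3
    intro x
    apply Set.Subset.antisymm
    · intro g hg
      obtain ⟨l, rfl⟩ := hsub hg
      have hxinf : mv x inf ∈ ConwayGroupoid mv inf := by
        rw [mv_symm' hD hmv]; exact ⟨[x], (one_mul _).symm⟩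
      obtain ⟨m, hm⟩ := hcl _ ⟨l, rfl⟩ _ hxinf
      refine ⟨inf :: m, ?_⟩
      show _ = moveSeq mv inf m * mv x inf
      rw [← hm, mul_assoc, hsq, mul_one]
    · rintro g ⟨l, rfl⟩
      exact ⟨x, l, rfl⟩
  have hC3' : (∀ x : Ω, allMoveSeqs mv = ConwayGroupoid mv x) →
      ∀ g ∈ ConwayGroupoid mv inf, ∀ h ∈ ConwayGroupoid mv inf,
        g * h ∈ ConwayGroupoid mv inf := by
    rintro hx g ⟨l, rfl⟩ h ⟨m, rfl⟩
    have hmem : moveSeq mv inf l ∈ ConwayGroupoid mv (m.getLastD inf) := by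
      rw [← hx]; exact ⟨inf, l, rfl⟩
    obtain ⟨l', hl'⟩ := hmem
    exact ⟨m ++ l', by rw [moveSeq_append', ← hl']⟩
  refine ⟨?_, ⟨hC3, hC3'⟩, ?_⟩
  · constructor
    · intro hcl
      have hall := hC3 hcl inf
      refine ⟨hall.symm, ?_⟩
      have hinv : ∀ g ∈ ConwayGroupoid mv inf, g⁻¹ ∈ ConwayGroupoid mv inf := by
        rintro g ⟨l, rfl⟩
        obtain ⟨l', h1, -⟩ := moveSeq_inv' hD hmv l inf
        rw [h1, ← hall]
        exact ⟨_, l', rfl⟩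
      have hgen : ∀ (l : List Ω) (a : Ω),
          moveSeq mv a l ∈ Subgroup.closure {g : Equiv.Perm Ω | ∃ a b : Ω, g = mv a b} := by
        intro l
        induction l with
        | nil => intro a; exact Subgroup.one_mem _
        | cons b t ih =>
          intro a
          exact Subgroup.mul_mem _ (ih b) (Subgroup.subset_closure ⟨a, b, rfl⟩)
      apply Set.Subset.antisymm
      · rintro g ⟨l, rfl⟩
        exact hgen l inf
      · let H : Subgroup (Equiv.Perm Ω) :=
          { carrier := ConwayGroupoid mv inf
            one_mem' := ⟨[], rfl⟩
            mul_mem' := fun ha hb => hcl _ ha _ hb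
            inv_mem' := fun ha => hinv _ ha }
        have hle : Subgroup.closure {g : Equiv.Perm Ω | ∃ a b : Ω, g = mv a b} ≤ H := by
          rw [Subgroup.closure_le]
          rintro g ⟨a, b, rfl⟩
          show mv a b ∈ ConwayGroupoid mv inf
          rw [← hall]
          exact hmvMem a b
        intro g hg
        exact hle hg
    · rintro ⟨-, h2⟩ g hg h hh
      rw [h2] at hg hh ⊢
      exact Subgroup.mul_mem _ hg hh
  · intro hcl
    have hall := hC3 hcl
    constructor
    · intro x _ y _
      refine ⟨mv x y, ?_, mv_self' hmv x y⟩
      rw [← hall inf]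
      exact hmvMem x y
    · ext g
      simp only [Set.mem_sep_iff]
      constructor
      · rintro ⟨⟨l, rfl⟩, hfix⟩
        have hl : l.getLastD inf = inf := by
          rw [← moveSeq_apply' hmv l inf]; exact hfix
        rcases eq_or_ne l [] with rfl | hne
        · refine ⟨[], ?_⟩
          show (1 : Equiv.Perm Ω) = 1 * mv inf inf
          rw [hmv.1, one_mul]
        · refine ⟨l.dropLast, ?_⟩
          conv_lhs => rw [eq_dropLast_concat_getLastD' l hne inf]
          rw [hl]
      · rintro ⟨l, rfl⟩
        refine ⟨⟨l ++ [inf], rfl⟩, ?_⟩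
        rw [moveSeq_apply' hmv, List.getLastD_concat]
end

section
/- Let m ≥ 2, V = F_2^{2m}, and θ as defined. Then each of the designs D^a and D^ε (for ε ∈ F_2) satisfies (△), and for each of these designs the set of its collinear triples forms a regular two-graph on its point set. -/
open Equiv

variable {Ω : Type*}

namespace SympAux

variable {m : ℕ}

def beta (u v : Vsp m) : ZMod 2 :=
  ∑ i : Fin m, (u (Sum.inl i) * v (Sum.inr i) + u (Sum.inr i) * v (Sum.inl i))

lemma z2 (x : ZMod 2) : x + x = 0 := CharTwo.add_self_eq_zero x

lemma v2 (x : Vsp m) : x + x = 0 := funext fun i => z2 (x i)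

lemma theta_add (u v : Vsp m) : theta (u + v) = theta u + theta v + beta u v := by
  simp only [theta, beta, ← Finset.sum_add_distrib, Pi.add_apply]
  refine Finset.sum_congr rfl fun i _ => by ring

lemma beta_comm (u v : Vsp m) : beta u v = beta v u := by
  refine Finset.sum_congr rfl fun i _ => by ring

lemma beta_self (u : Vsp m) : beta u u = 0 := by
  refine Finset.sum_eq_zero fun i _ => by rw [mul_comm (u (Sum.inr i))]; exact z2 _

lemma beta_add_left (u v w : Vsp m) : beta (u + v) w = beta u w + beta v w := by
  simp only [beta, ← Finset.sum_add_distrib, Pi.add_apply]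
  refine Finset.sum_congr rfl fun i _ => by ring

lemma beta_add_right (u v w : Vsp m) : beta u (v + w) = beta u v + beta u w := by
  rw [beta_comm, beta_add_left, beta_comm v u, beta_comm w u]

lemma beta_single_inr (u : Vsp m) (i : Fin m) :
    beta u (Pi.single (Sum.inr i) 1) = u (Sum.inl i) := by
  simp only [beta]
  rw [Finset.sum_eq_single i]
  · simp [Pi.single_apply]
  · intro j _ hj
    simp [Pi.single_apply, (by simp [hj] : (Sum.inr j : Fin m ⊕ Fin m) ≠ Sum.inr i), hj]
  · simp

lemma beta_single_inl (u : Vsp m) (i : Fin m) :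
    beta u (Pi.single (Sum.inl i) 1) = u (Sum.inr i) := by
  simp only [beta]
  rw [Finset.sum_eq_single i]
  · simp [Pi.single_apply]
  · intro j _ hj
    simp [Pi.single_apply, (by simp [hj] : (Sum.inl j : Fin m ⊕ Fin m) ≠ Sum.inl i), hj]
  · simp

lemma exists_beta_one {v : Vsp m} (hv : v ≠ 0) : ∃ w, beta v w = 1 := by
  have : ∃ j, v j ≠ 0 := by
    by_contra h
    push_neg at h
    exact hv (funext fun j => h j)
  obtain ⟨j, hj⟩ := this
  have hj1 : v j = 1 := by revert hj; generalize v j = x; revert x; decide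
  cases j with
  | inl i => exact ⟨Pi.single (Sum.inr i) 1, by rw [beta_single_inr, hj1]⟩
  | inr i => exact ⟨Pi.single (Sum.inl i) 1, by rw [beta_single_inl, hj1]⟩


open Finset

lemma card_V : Fintype.card (Vsp m) = 2 ^ (2 * m) := by
  simp [Vsp, two_mul]

lemma zmod2_cases (x : ZMod 2) : x = 0 ∨ x = 1 := by revert x; decide

lemma card_fiber_beta (hm : 1 ≤ m) {v : Vsp m} (hv : v ≠ 0) (δ : ZMod 2) :
    (univ.filter fun c => beta v c = δ).card = 2 ^ (2 * m - 1) := by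
  obtain ⟨w, hw⟩ := exists_beta_one hv
  have key : ∀ δ' : ZMod 2, (univ.filter fun c => beta v c = δ').card =
      (univ.filter fun c => beta v c = δ' + 1).card := by
    intro δ'
    apply Finset.card_bij' (fun c _ => c + w) (fun c _ => c + w)
    · intro c hc
      simp only [mem_filter, mem_univ, true_and] at hc ⊢
      rw [beta_add_right, hc, hw]
    · intro c hc
      simp only [mem_filter, mem_univ, true_and] at hc ⊢
      rw [beta_add_right, hc, hw, add_assoc, z2, add_zero]
    · intro c _; rw [add_assoc, v2, add_zero]
    · intro c _; rw [add_assoc, v2, add_zero]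
  have h01 : (univ.filter fun c : Vsp m => beta v c = 0).card =
      (univ.filter fun c : Vsp m => beta v c = 1).card := by
    simpa using key 0
  have hne : (univ.filter fun c : Vsp m => beta v c = 1) =
      univ.filter (fun c : Vsp m => ¬ beta v c = 0) := by
    apply Finset.filter_congr
    intro c _
    constructor
    · intro h; rw [h]; decide
    · intro h
      rcases zmod2_cases (beta v c) with h0 | h1
      · exact absurd h0 h
      · exact h1
  have hsum : (univ.filter fun c : Vsp m => beta v c = 0).card +
      (univ.filter fun c : Vsp m => beta v c = 1).card = 2 ^ (2 * m) := by
    rw [← card_V (m := m), ← Finset.card_univ, hne,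
      Finset.card_filter_add_card_filter_not]
  have hpow : 2 ^ (2 * m) = 2 ^ (2 * m - 1) + 2 ^ (2 * m - 1) := by
    rw [← two_mul, ← pow_succ']
    congr 1; omega
  rcases zmod2_cases δ with h | h <;> subst h <;> omega


def chi (x : ZMod 2) : ℤ := 1 - 2 * x.val

lemma chi_mul (a b : ZMod 2) : chi (a + b) = chi a * chi b := by revert a b; decide

lemma chi_sum {ι : Type*} (s : Finset ι) (g : ι → ZMod 2) :
    chi (∑ i ∈ s, g i) = ∏ i ∈ s, chi (g i) := by
  induction s using Finset.cons_induction with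
  | empty => simp [chi]
  | cons a s ha ih => rw [Finset.sum_cons, Finset.prod_cons, chi_mul, ih]

lemma gauss_sum : ∑ f : Fin m → ZMod 2 × ZMod 2, chi (∑ i, (f i).1 * (f i).2) = 2 ^ m := by
  have h1 : ∀ f : Fin m → ZMod 2 × ZMod 2,
      chi (∑ i, (f i).1 * (f i).2) = ∏ i, chi ((f i).1 * (f i).2) := fun f => chi_sum _ _
  simp_rw [h1]
  rw [← Fintype.piFinset_univ, ← Finset.prod_univ_sum (fun _ : Fin m => (univ : Finset (ZMod 2 × ZMod 2))) (fun _ j => chi (j.1 * j.2))]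
  simp_rw [show (∑ j : ZMod 2 × ZMod 2, chi (j.1 * j.2)) = 2 from by decide]
  simp

def Esp : (Fin m → ZMod 2 × ZMod 2) ≃ Vsp m where
  toFun f := Sum.elim (fun i => (f i).1) (fun i => (f i).2)
  invFun c i := (c (Sum.inl i), c (Sum.inr i))
  left_inv f := funext fun i => by simp
  right_inv c := funext fun j => by cases j <;> simp

lemma theta_Esp (f : Fin m → ZMod 2 × ZMod 2) :
    theta (Esp f) = ∑ i, (f i).1 * (f i).2 := by
  simp [theta, Esp]

lemma card_theta (hm : 1 ≤ m) :
    ((univ.filter fun c : Vsp m => theta c = 0).card = 2 ^ (2 * m - 1) + 2 ^ (m - 1)) ∧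
    ((univ.filter fun c : Vsp m => theta c = 1).card = 2 ^ (2 * m - 1) - 2 ^ (m - 1)) := by
  have hcard : ∀ s : ZMod 2, (univ.filter fun c : Vsp m => theta c = s).card
      = (univ.filter fun f : Fin m → ZMod 2 × ZMod 2 => (∑ i, (f i).1 * (f i).2) = s).card := by
    intro s
    apply Finset.card_bij' (fun c _ => Esp.symm c) (fun f _ => Esp f)
    · intro c hc
      simp only [mem_filter, mem_univ, true_and] at hc ⊢
      rw [← theta_Esp, Esp.apply_symm_apply, hc]
    · intro f hf
      simp only [mem_filter, mem_univ, true_and] at hf ⊢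
      rw [theta_Esp, hf]
    · intro c _; exact Esp.apply_symm_apply c
    · intro f _; exact Esp.symm_apply_apply f
  set Q : (Fin m → ZMod 2 × ZMod 2) → ZMod 2 := fun f => ∑ i, (f i).1 * (f i).2 with hQ
  have hne : (univ.filter fun f => Q f = 1) = univ.filter (fun f => ¬ Q f = 0) := by
    apply Finset.filter_congr
    intro f _
    constructor
    · intro h; rw [h]; decide
    · intro h
      rcases zmod2_cases (Q f) with h0 | h1
      · exact absurd h0 h
      · exact h1
  have hsum : (univ.filter fun f => Q f = 0).card + (univ.filter fun f => Q f = 1).card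
      = 4 ^ m := by
    rw [hne, Finset.card_filter_add_card_filter_not, Finset.card_univ]
    simp
  have hdiff : ((univ.filter fun f => Q f = 0).card : ℤ)
      - ((univ.filter fun f => Q f = 1).card : ℤ) = 2 ^ m := by
    have hs := Finset.sum_filter_add_sum_filter_not (univ : Finset (Fin m → ZMod 2 × ZMod 2))
      (fun f => Q f = 0) (fun f => chi (Q f))
    rw [gauss_sum] at hs
    have e0 : ∑ f ∈ univ.filter (fun f => Q f = 0), chi (Q f)
        = ((univ.filter fun f => Q f = 0).card : ℤ) := by
      rw [Finset.card_eq_sum_ones]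
      push_cast
      apply Finset.sum_congr rfl
      intro f hf
      simp only [mem_filter] at hf
      rw [hf.2]; decide
    have e1 : ∑ f ∈ univ.filter (fun f => ¬ Q f = 0), chi (Q f)
        = -((univ.filter fun f => Q f = 1).card : ℤ) := by
      have hval : ∀ f ∈ univ.filter (fun f => ¬ Q f = 0), chi (Q f) = -1 := by
        intro f hf
        simp only [mem_filter] at hf
        rcases zmod2_cases (Q f) with h0 | h1
        · exact absurd h0 hf.2
        · rw [h1]; decide
      rw [Finset.sum_congr rfl hval, Finset.sum_const, hne]
      simp
    rw [e0, e1] at hs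
    linarith
  have hp1 : (4:ℕ) ^ m = 2 * 2 ^ (2 * m - 1) := by
    have : (4:ℕ) ^ m = 2 ^ (2 * m) := by
      rw [show (4:ℕ) = 2 ^ 2 from rfl, ← pow_mul]
    rw [this, ← pow_succ']
    congr 1; omega
  have hp2 : (2:ℤ) ^ m = 2 * 2 ^ (m - 1) := by
    rw [← pow_succ']
    congr 1; omega
  have hp2' : (2:ℤ) ^ (m-1) = ((2 ^ (m-1) : ℕ) : ℤ) := by push_cast; ring
  rw [hp2, hp2'] at hdiff
  obtain ⟨a, ha⟩ : ∃ a, (univ.filter fun f => Q f = 0).card = a := ⟨_, rfl⟩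
  obtain ⟨b, hb⟩ : ∃ b, (univ.filter fun f => Q f = 1).card = b := ⟨_, rfl⟩
  obtain ⟨p, hp⟩ : ∃ p, 2 ^ (2 * m - 1) = p := ⟨_, rfl⟩
  obtain ⟨q, hq⟩ : ∃ q, 2 ^ (m - 1) = q := ⟨_, rfl⟩
  rw [ha, hb] at hsum hdiff
  rw [hp] at hp1
  rw [hq] at hdiff
  constructor
  · rw [hcard 0, ha, hp, hq]; omega
  · rw [hcard 1, hb, hp, hq]; omega


lemma zn (x : ZMod 2) : (¬ x = 0) ↔ x = 1 := by revert x; decide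

lemma zmod2_ne (x δ : ZMod 2) : (¬ x = δ) ↔ x = δ + 1 := by revert x δ; decide

lemma card_theta_beta (hm : 1 ≤ m) {v : Vsp m} (hv : v ≠ 0) (ε : ZMod 2) :
    (univ.filter fun c : Vsp m => theta c = ε ∧ beta v c = theta v).card + 2 ^ (2 * m - 2)
      = (univ.filter fun c : Vsp m => theta c = ε).card := by
  have zkey : ∀ a b : ZMod 2, a + b + (b + 1) = a + 1 := by decide
  have key : ∀ s : ZMod 2,
      (univ.filter fun c : Vsp m => theta c = s ∧ beta v c = theta v + 1).card
      = (univ.filter fun c : Vsp m => theta c = s + 1 ∧ beta v c = theta v + 1).card := by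
    intro s
    apply Finset.card_bij' (fun c _ => c + v) (fun c _ => c + v)
    · intro c hc
      simp only [mem_filter, mem_univ, true_and] at hc ⊢
      refine ⟨?_, ?_⟩
      · rw [theta_add, beta_comm, hc.1, hc.2, zkey]
      · rw [beta_add_right, beta_self, add_zero, hc.2]
    · intro c hc
      simp only [mem_filter, mem_univ, true_and] at hc ⊢
      refine ⟨?_, ?_⟩
      · rw [theta_add, beta_comm, hc.1, hc.2, zkey, add_assoc, z2, add_zero]
      · rw [beta_add_right, beta_self, add_zero, hc.2]
    · intro c _; rw [add_assoc, v2, add_zero]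
    · intro c _; rw [add_assoc, v2, add_zero]
  have hsplit : ∀ δ' : ZMod 2,
      (univ.filter fun c : Vsp m => theta c = 0 ∧ beta v c = δ').card
      + (univ.filter fun c : Vsp m => theta c = 1 ∧ beta v c = δ').card
      = (univ.filter fun c : Vsp m => beta v c = δ').card := by
    intro δ'
    have h := Finset.card_filter_add_card_filter_not
      (s := univ.filter fun c : Vsp m => beta v c = δ') (p := fun c => theta c = 0)
    rw [filter_filter, filter_filter] at h
    have e1 : (univ.filter fun a : Vsp m => beta v a = δ' ∧ theta a = 0)
        = univ.filter fun c : Vsp m => theta c = 0 ∧ beta v c = δ' := by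
      ext c
      simp only [mem_filter, mem_univ, true_and]
      exact and_comm
    have e2 : (univ.filter fun a : Vsp m => beta v a = δ' ∧ ¬ theta a = 0)
        = univ.filter fun c : Vsp m => theta c = 1 ∧ beta v c = δ' := by
      ext c
      simp only [mem_filter, mem_univ, true_and, zn]
      exact and_comm
    rw [e1, e2] at h
    exact h
  have hX : (univ.filter fun c : Vsp m => theta c = ε ∧ beta v c = theta v + 1).card
      = 2 ^ (2 * m - 2) := by
    have h0 := key 0
    have hcol := hsplit (theta v + 1)
    rw [card_fiber_beta hm hv] at hcol
    have h01 : ((0 : ZMod 2) + 1) = 1 := by decide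
    rw [h01] at h0
    have hpow : 2 ^ (2 * m - 1) = 2 ^ (2 * m - 2) + 2 ^ (2 * m - 2) := by
      rw [← two_mul, ← pow_succ']
      congr 1; omega
    rcases zmod2_cases ε with h | h <;> subst h <;> omega
  have hrow : (univ.filter fun c : Vsp m => theta c = ε ∧ beta v c = theta v).card
      + (univ.filter fun c : Vsp m => theta c = ε ∧ beta v c = theta v + 1).card
      = (univ.filter fun c : Vsp m => theta c = ε).card := by
    have h := Finset.card_filter_add_card_filter_not
      (s := univ.filter fun c : Vsp m => theta c = ε) (p := fun c => beta v c = theta v)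
    rw [filter_filter, filter_filter] at h
    have e2 : (univ.filter fun c : Vsp m => theta c = ε ∧ ¬ beta v c = theta v)
        = univ.filter fun c : Vsp m => theta c = ε ∧ beta v c = theta v + 1 := by
      ext c
      simp only [mem_filter, mem_univ, true_and, zmod2_ne]
    rw [e2] at h
    exact h
  omega


lemma veq {x y : Vsp m} (h : x + y = 0) : x = y := by
  rw [eq_neg_of_add_eq_zero_left h]
  exact neg_eq_of_add_eq_zero_left (v2 y)

lemma zeq {x y : ZMod 2} : x + y = 0 ↔ x = y := by revert x y; decide

lemma theta_three (a b c : Vsp m) :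
    theta (a + b + c) = theta a + theta b + theta c + (beta a b + beta a c + beta b c) := by
  rw [theta_add (a + b) c, theta_add a b, beta_add_left]
  ring

lemma mem_collinearA {t : Finset (Vsp m)} :
    t ∈ collinearTriples (linesA m) ↔
      t.card = 3 ∧ theta (∑ v ∈ t, v) = ∑ v ∈ t, theta v := by
  constructor
  · rintro ⟨h3, L, ⟨hL4, hLs, hLt⟩, hsub⟩
    refine ⟨h3, ?_⟩
    have hc1 : (L \ t).card = 1 := by rw [Finset.card_sdiff_of_subset hsub, hL4, h3]
    obtain ⟨d, hd⟩ := Finset.card_eq_one.mp hc1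
    have hs := Finset.sum_sdiff (f := fun v => v) hsub
    have ht := Finset.sum_sdiff (f := theta) hsub
    rw [hd, Finset.sum_singleton] at hs ht
    rw [hLs] at hs
    rw [hLt] at ht
    rw [← veq hs]
    exact zeq.mp ht
  · rintro ⟨h3, hth⟩
    obtain ⟨a, b, c, hab, hac, hbc, rfl⟩ := Finset.card_eq_three.mp h3
    set d := ∑ v ∈ ({a, b, c} : Finset (Vsp m)), v with hdd
    have hsum : d = a + b + c := by
      rw [hdd, Finset.sum_insert (by simp [hab, hac]), Finset.sum_insert (by simp [hbc]),
        Finset.sum_singleton, add_assoc]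
    have hd : d ∉ ({a, b, c} : Finset (Vsp m)) := by
      intro hmem
      simp only [Finset.mem_insert, Finset.mem_singleton] at hmem
      rcases hmem with h | h | h
      · rw [hsum, add_assoc] at h
        have h2 : b + c = 0 := add_left_cancel (by rw [h, add_zero] : a + (b + c) = a + 0)
        exact hbc (veq h2)
      · rw [hsum] at h
        have hcomm : b + (a + c) = a + b + c := by ring
        have h2 : a + c = 0 := add_left_cancel (by rw [hcomm, h, add_zero] : b + (a + c) = b + 0)
        exact hac (veq h2)
      · rw [hsum] at h
        have hcomm : c + (a + b) = a + b + c := by ring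
        have h2 : a + b = 0 := add_left_cancel (by rw [hcomm, h, add_zero] : c + (a + b) = c + 0)
        exact hab (veq h2)
    refine ⟨h3, insert d {a, b, c}, ⟨?_, ?_, ?_⟩, Finset.subset_insert _ _⟩
    · rw [Finset.card_insert_of_notMem hd, h3]
    · rw [Finset.sum_insert hd, ← hdd, v2]
    · rw [Finset.sum_insert hd, hth]
      exact z2 _

lemma mem_collinearE {ε : ZMod 2} {t : Finset {v : Vsp m // theta v = ε}} :
    t ∈ collinearTriples (linesEps m ε) ↔
      t.card = 3 ∧ theta (∑ v ∈ t, (v : Vsp m)) = ε := by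
  constructor
  · rintro ⟨h3, L, ⟨hL4, hLs⟩, hsub⟩
    refine ⟨h3, ?_⟩
    have hc1 : (L \ t).card = 1 := by rw [Finset.card_sdiff_of_subset hsub, hL4, h3]
    obtain ⟨d, hd⟩ := Finset.card_eq_one.mp hc1
    have hs := Finset.sum_sdiff (f := fun v : {v : Vsp m // theta v = ε} => (v : Vsp m)) hsub
    rw [hd, Finset.sum_singleton, hLs] at hs
    rw [← veq hs]
    exact d.2
  · rintro ⟨h3, hth⟩
    obtain ⟨a, b, c, hab, hac, hbc, rfl⟩ := Finset.card_eq_three.mp h3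
    set σ := ∑ v ∈ ({a, b, c} : Finset {v : Vsp m // theta v = ε}), (v : Vsp m) with hσσ
    have hsum : σ = (a : Vsp m) + b + c := by
      rw [hσσ, Finset.sum_insert (by simp [hab, hac]), Finset.sum_insert (by simp [hbc]),
        Finset.sum_singleton, add_assoc]
    set D : {v : Vsp m // theta v = ε} := ⟨σ, hth⟩ with hDD
    have hd : D ∉ ({a, b, c} : Finset {v : Vsp m // theta v = ε}) := by
      intro hmem
      simp only [Finset.mem_insert, Finset.mem_singleton] at hmem
      have hval : ∀ x y : {v : Vsp m // theta v = ε}, x = y → (x : Vsp m) = y := by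
        intro x y h; rw [h]
      rcases hmem with h | h | h
      · have h' : σ = (a : Vsp m) := by rw [hDD] at h; exact congrArg Subtype.val h
        rw [hsum, add_assoc] at h'
        have h2 : (b : Vsp m) + c = 0 :=
          add_left_cancel (by rw [h', add_zero] : (a : Vsp m) + ((b : Vsp m) + c) = (a : Vsp m) + 0)
        exact hbc (Subtype.ext (veq h2))
      · have h' : σ = (b : Vsp m) := by rw [hDD] at h; exact congrArg Subtype.val h
        rw [hsum] at h'
        have hcomm : (b : Vsp m) + ((a : Vsp m) + c) = (a : Vsp m) + b + c := by ring
        have h2 : (a : Vsp m) + c = 0 :=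
          add_left_cancel (by rw [hcomm, h', add_zero] : (b : Vsp m) + ((a : Vsp m) + c) = (b : Vsp m) + 0)
        exact hac (Subtype.ext (veq h2))
      · have h' : σ = (c : Vsp m) := by rw [hDD] at h; exact congrArg Subtype.val h
        rw [hsum] at h'
        have hcomm : (c : Vsp m) + ((a : Vsp m) + b) = (a : Vsp m) + b + c := by ring
        have h2 : (a : Vsp m) + (b : Vsp m) = 0 :=
          add_left_cancel (by rw [hcomm, h', add_zero] : (c : Vsp m) + ((a : Vsp m) + b) = (c : Vsp m) + 0)
        exact hab (Subtype.ext (veq h2))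
    refine ⟨h3, insert D {a, b, c}, ⟨?_, ?_⟩, Finset.subset_insert _ _⟩
    · rw [Finset.card_insert_of_notMem hd, h3]
    · rw [Finset.sum_insert hd, ← hσσ]
      exact v2 σ


lemma collinear_insert_iffA {a b c : Vsp m} (hab : a ≠ b) (hca : c ≠ a) (hcb : c ≠ b) :
    insert c ({a, b} : Finset (Vsp m)) ∈ collinearTriples (linesA m)
      ↔ beta (a + b) c = beta a b := by
  rw [mem_collinearA]
  have hcm : c ∉ ({a, b} : Finset (Vsp m)) := by simp [hca, hcb]
  have h3 : (insert c ({a, b} : Finset (Vsp m))).card = 3 := by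
    rw [Finset.card_insert_of_notMem hcm, Finset.card_pair hab]
  rw [Finset.sum_insert hcm, Finset.sum_pair hab, Finset.sum_insert hcm, Finset.sum_pair hab]
  simp only [h3, true_and]
  rw [theta_add c (a + b), theta_add a b, beta_comm c, beta_add_left]
  generalize theta a = x1
  generalize theta b = x2
  generalize theta c = x3
  generalize beta a b = y1
  generalize beta a c = y2
  generalize beta b c = y3
  revert x1 x2 x3 y1 y2 y3
  decide

lemma collinear_insert_iffE {ε : ZMod 2} {a b c : {v : Vsp m // theta v = ε}}
    (hab : a ≠ b) (hca : c ≠ a) (hcb : c ≠ b) :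
    insert c ({a, b} : Finset {v : Vsp m // theta v = ε}) ∈ collinearTriples (linesEps m ε)
      ↔ beta ((a : Vsp m) + (b : Vsp m)) (c : Vsp m) = theta ((a : Vsp m) + (b : Vsp m)) := by
  rw [mem_collinearE]
  have hcm : c ∉ ({a, b} : Finset {v : Vsp m // theta v = ε}) := by simp [hca, hcb]
  have h3 : (insert c ({a, b} : Finset {v : Vsp m // theta v = ε})).card = 3 := by
    rw [Finset.card_insert_of_notMem hcm, Finset.card_pair hab]
  rw [Finset.sum_insert hcm, Finset.sum_pair hab]
  simp only [h3, true_and]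
  rw [theta_add (c : Vsp m) ((a : Vsp m) + (b : Vsp m)), c.2, beta_comm (c : Vsp m)]
  exact (by decide : ∀ e x y : ZMod 2, (e + x + y = e ↔ y = x)) ε _ _

lemma muA (hm : 1 ≤ m) {p : Finset (Vsp m)} (hp : p.card = 2) :
    {t ∈ collinearTriples (linesA m) | p ⊆ t}.ncard = 2 ^ (2 * m - 1) - 2 := by
  classical
  obtain ⟨a, b, hab, rfl⟩ := Finset.card_eq_two.mp hp
  have hvne : a + b ≠ 0 := fun h => hab (veq h)
  set F : Finset (Vsp m) := univ.filter (fun c => beta (a + b) c = beta a b) with hFF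
  set S : Finset (Vsp m) := F \ {a, b} with hSS
  have hmemS : ∀ c : Vsp m, c ∈ S ↔ (beta (a + b) c = beta a b ∧ c ≠ a ∧ c ≠ b) := by
    intro c
    rw [hSS, Finset.mem_sdiff, hFF, mem_filter]
    simp [and_assoc]
  have hset : {t ∈ collinearTriples (linesA m) | {a, b} ⊆ t}
      = ↑(S.image fun c => insert c ({a, b} : Finset (Vsp m))) := by
    ext t
    simp only [Set.mem_setOf_eq, coe_image, Set.mem_image, mem_coe]
    constructor
    · rintro ⟨htC, hsub⟩
      have h3 := (mem_collinearA.mp htC).1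
      have hc1 : (t \ {a, b}).card = 1 := by
        rw [Finset.card_sdiff_of_subset hsub, h3, Finset.card_pair hab]
      obtain ⟨c, hc⟩ := Finset.card_eq_one.mp hc1
      have hcmem : c ∈ t \ ({a, b} : Finset (Vsp m)) := by
        rw [hc]; exact Finset.mem_singleton_self c
      rw [Finset.mem_sdiff] at hcmem
      have hca : c ≠ a := fun h => hcmem.2 (by simp [h])
      have hcb : c ≠ b := fun h => hcmem.2 (by simp [h])
      have ht' : t = insert c {a, b} := by
        rw [← Finset.sdiff_union_of_subset hsub, hc, ← Finset.insert_eq]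
      refine ⟨c, ?_, ht'.symm⟩
      rw [hmemS]
      exact ⟨(collinear_insert_iffA hab hca hcb).mp (ht' ▸ htC), hca, hcb⟩
    · rintro ⟨c, hcS, rfl⟩
      rw [hmemS] at hcS
      obtain ⟨hcond, hca, hcb⟩ := hcS
      exact ⟨(collinear_insert_iffA hab hca hcb).mpr hcond, Finset.subset_insert _ _⟩
  rw [hset, Set.ncard_coe_finset]
  have hinj : Set.InjOn (fun c => insert c ({a, b} : Finset (Vsp m))) ↑S := by
    intro c hc c' hc' h
    rw [mem_coe, hmemS] at hc hc'
    have h2 : insert c ({a, b} : Finset (Vsp m)) = insert c' ({a, b} : Finset (Vsp m)) := h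
    have hmem : c ∈ insert c' ({a, b} : Finset (Vsp m)) := h2 ▸ Finset.mem_insert_self _ _
    simp only [Finset.mem_insert, Finset.mem_singleton] at hmem
    rcases hmem with h1 | h1 | h1
    · exact h1
    · exact absurd h1 hc.2.1
    · exact absurd h1 hc.2.2
  rw [Finset.card_image_of_injOn hinj]
  have hsub2 : ({a, b} : Finset (Vsp m)) ⊆ F := by
    intro x hx
    rw [hFF, mem_filter]
    refine ⟨mem_univ _, ?_⟩
    simp only [Finset.mem_insert, Finset.mem_singleton] at hx
    rcases hx with rfl | rfl
    · rw [beta_add_left, beta_self, zero_add, beta_comm]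
    · rw [beta_add_left, beta_self, add_zero]
  rw [hSS, Finset.card_sdiff_of_subset hsub2, Finset.card_pair hab, hFF, card_fiber_beta hm hvne]

lemma muE (hm : 1 ≤ m) (ε : ZMod 2) {p : Finset {v : Vsp m // theta v = ε}} (hp : p.card = 2) :
    {t ∈ collinearTriples (linesEps m ε) | p ⊆ t}.ncard
      = ((univ.filter fun c : Vsp m => theta c = ε).card - 2 ^ (2 * m - 2)) - 2 := by
  classical
  obtain ⟨a, b, hab, rfl⟩ := Finset.card_eq_two.mp hp
  have habv : (a : Vsp m) ≠ b := fun h => hab (Subtype.ext h)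
  have hvne : ((a : Vsp m) + (b : Vsp m)) ≠ 0 := fun h => habv (veq h)
  set F : Finset {v : Vsp m // theta v = ε} :=
    univ.filter (fun c => beta (((a : Vsp m) + (b : Vsp m))) (c : Vsp m) = theta (((a : Vsp m) + (b : Vsp m)))) with hFF
  set S := F \ ({a, b} : Finset {v : Vsp m // theta v = ε}) with hSS
  have hmemS : ∀ c : {v : Vsp m // theta v = ε}, c ∈ S ↔
      (beta (((a : Vsp m) + (b : Vsp m))) (c : Vsp m) = theta (((a : Vsp m) + (b : Vsp m))) ∧ c ≠ a ∧ c ≠ b) := by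
    intro c
    rw [hSS, Finset.mem_sdiff, hFF, mem_filter]
    simp [and_assoc]
  have hset : {t ∈ collinearTriples (linesEps m ε) | {a, b} ⊆ t}
      = ↑(S.image fun c => insert c ({a, b} : Finset {v : Vsp m // theta v = ε})) := by
    ext t
    simp only [Set.mem_setOf_eq, coe_image, Set.mem_image, mem_coe]
    constructor
    · rintro ⟨htC, hsub⟩
      have h3 := (mem_collinearE.mp htC).1
      have hc1 : (t \ {a, b}).card = 1 := by
        rw [Finset.card_sdiff_of_subset hsub, h3, Finset.card_pair hab]
      obtain ⟨c, hc⟩ := Finset.card_eq_one.mp hc1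
      have hcmem : c ∈ t \ ({a, b} : Finset {v : Vsp m // theta v = ε}) := by
        rw [hc]; exact Finset.mem_singleton_self c
      rw [Finset.mem_sdiff] at hcmem
      have hca : c ≠ a := fun h => hcmem.2 (by simp [h])
      have hcb : c ≠ b := fun h => hcmem.2 (by simp [h])
      have ht' : t = insert c {a, b} := by
        rw [← Finset.sdiff_union_of_subset hsub, hc, ← Finset.insert_eq]
      refine ⟨c, ?_, ht'.symm⟩
      rw [hmemS]
      exact ⟨(collinear_insert_iffE hab hca hcb).mp (ht' ▸ htC), hca, hcb⟩
    · rintro ⟨c, hcS, rfl⟩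
      rw [hmemS] at hcS
      obtain ⟨hcond, hca, hcb⟩ := hcS
      exact ⟨(collinear_insert_iffE hab hca hcb).mpr hcond, Finset.subset_insert _ _⟩
  rw [hset, Set.ncard_coe_finset]
  have hinj : Set.InjOn (fun c => insert c ({a, b} : Finset {v : Vsp m // theta v = ε})) ↑S := by
    intro c hc c' hc' h
    rw [mem_coe, hmemS] at hc hc'
    have h2 : insert c ({a, b} : Finset {v : Vsp m // theta v = ε})
        = insert c' ({a, b} : Finset {v : Vsp m // theta v = ε}) := h
    have hmem : c ∈ insert c' ({a, b} : Finset {v : Vsp m // theta v = ε}) :=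
      h2 ▸ Finset.mem_insert_self _ _
    simp only [Finset.mem_insert, Finset.mem_singleton] at hmem
    rcases hmem with h1 | h1 | h1
    · exact h1
    · exact absurd h1 hc.2.1
    · exact absurd h1 hc.2.2
  rw [Finset.card_image_of_injOn hinj]
  have htv : theta (((a : Vsp m) + (b : Vsp m))) = beta (a : Vsp m) b := by
    rw [theta_add, a.2, b.2]
    exact (by decide : ∀ e y : ZMod 2, e + e + y = y) ε _
  have hsub2 : ({a, b} : Finset {v : Vsp m // theta v = ε}) ⊆ F := by
    intro x hx
    rw [hFF, mem_filter]
    refine ⟨mem_univ _, ?_⟩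
    simp only [Finset.mem_insert, Finset.mem_singleton] at hx
    rcases hx with rfl | rfl
    · rw [beta_add_left, beta_self, zero_add, beta_comm, htv]
    · rw [beta_add_left, beta_self, add_zero, htv]
  rw [hSS, Finset.card_sdiff_of_subset hsub2, Finset.card_pair hab]
  congr 1
  rw [hFF]
  have hcount := card_theta_beta (v := ((a : Vsp m) + (b : Vsp m))) hm hvne ε
  have hF : (univ.filter fun c : {v : Vsp m // theta v = ε} =>
      beta (((a : Vsp m) + (b : Vsp m))) (c : Vsp m) = theta (((a : Vsp m) + (b : Vsp m)))).card
      = (univ.filter fun c : Vsp m =>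
        theta c = ε ∧ beta (((a : Vsp m) + (b : Vsp m))) c = theta (((a : Vsp m) + (b : Vsp m)))).card := by
    apply Finset.card_nbij (i := fun c : {v : Vsp m // theta v = ε} => (c : Vsp m))
    · intro c hc
      rw [mem_coe, mem_filter] at hc ⊢
      exact ⟨mem_univ _, c.2, hc.2⟩
    · intro c _ c' _ h
      exact Subtype.ext h
    · intro c hc
      simp only [mem_coe, mem_filter, mem_univ, true_and] at hc
      exact ⟨⟨c, hc.1⟩, by simp [mem_filter, hc.2], rfl⟩
  rw [hF]
  omega


lemma parity_key : ∀ u1 u2 u3 u4 u5 u6 : ZMod 2,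
    ((if u4 + u5 + u6 = 0 then (1:ℕ) else 0) + ((if u2 + u3 + u6 = 0 then (1:ℕ) else 0)
      + ((if u1 + u3 + u5 = 0 then (1:ℕ) else 0) + (if u1 + u2 + u4 = 0 then (1:ℕ) else 0))))
      = 0 ∨
    ((if u4 + u5 + u6 = 0 then (1:ℕ) else 0) + ((if u2 + u3 + u6 = 0 then (1:ℕ) else 0)
      + ((if u1 + u3 + u5 = 0 then (1:ℕ) else 0) + (if u1 + u2 + u4 = 0 then (1:ℕ) else 0))))
      = 2 ∨
    ((if u4 + u5 + u6 = 0 then (1:ℕ) else 0) + ((if u2 + u3 + u6 = 0 then (1:ℕ) else 0)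
      + ((if u1 + u3 + u5 = 0 then (1:ℕ) else 0) + (if u1 + u2 + u4 = 0 then (1:ℕ) else 0))))
      = 4 := by decide

lemma four_count {Ω : Type*} [DecidableEq Ω] (C : Set (Finset Ω)) (g : Ω → Ω → ZMod 2)
    (hC : ∀ x y z : Ω, x ≠ y → x ≠ z → y ≠ z →
      (({x, y, z} : Finset Ω) ∈ C ↔ g x y + g x z + g y z = 0))
    (hC3 : ∀ t ∈ C, t.card = 3)
    {q : Finset Ω} (hq : q.card = 4) :
    {t ∈ C | t ⊆ q}.ncard = 0 ∨ {t ∈ C | t ⊆ q}.ncard = 2 ∨ {t ∈ C | t ⊆ q}.ncard = 4 := by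
  classical
  obtain ⟨a, r, har, rfl, hr3⟩ := Finset.card_eq_succ.mp hq
  obtain ⟨b, c, d, hbc, hbd, hcd, rfl⟩ := Finset.card_eq_three.mp hr3
  have hab : a ≠ b := fun h => har (by simp [h])
  have hac : a ≠ c := fun h => har (by simp [h])
  have had : a ≠ d := fun h => har (by simp [h])
  have ha1 : a ∉ ({b, c, d} : Finset Ω) := har
  have hb1 : b ∉ ({a, c, d} : Finset Ω) := by simp [hab.symm, hbc, hbd]
  have hc1 : c ∉ ({a, b, d} : Finset Ω) := by simp [hac.symm, hbc.symm, hcd]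
  have he_a : (insert a ({b, c, d} : Finset Ω)).erase a = {b, c, d} :=
    Finset.erase_insert har
  have he_b : (insert a ({b, c, d} : Finset Ω)).erase b = {a, c, d} := by
    rw [Finset.erase_insert_of_ne hab, Finset.erase_insert (by simp [hbc, hbd])]
  have he_c : (insert a ({b, c, d} : Finset Ω)).erase c = {a, b, d} := by
    rw [Finset.erase_insert_of_ne hac, Finset.erase_insert_of_ne hbc,
      Finset.erase_insert (by simp [hcd])]
  have he_d : (insert a ({b, c, d} : Finset Ω)).erase d = {a, b, c} := by
    rw [Finset.erase_insert_of_ne had, Finset.erase_insert_of_ne hbd,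
      Finset.erase_insert_of_ne hcd, Finset.erase_singleton]
    simp
  set q : Finset Ω := insert a {b, c, d} with hqq
  have hset : {t ∈ C | t ⊆ q}
      = ↑((({ {b,c,d}, {a,c,d}, {a,b,d}, {a,b,c} } : Finset (Finset Ω))).filter (· ∈ C)) := by
    ext t
    simp only [Set.mem_setOf_eq, mem_coe, mem_filter, Finset.mem_insert, Finset.mem_singleton]
    constructor
    · rintro ⟨htC, hsub⟩
      have h3 := hC3 t htC
      have hcd1 : (q \ t).card = 1 := by rw [Finset.card_sdiff_of_subset hsub, hq, h3]
      obtain ⟨x, hx⟩ := Finset.card_eq_one.mp hcd1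
      have ht : t = q.erase x := by
        rw [← Finset.sdiff_singleton_eq_erase, ← hx, Finset.sdiff_sdiff_eq_self hsub]
      have hxq : x ∈ q := by
        have hx2 : x ∈ q \ t := by rw [hx]; exact Finset.mem_singleton_self x
        exact (Finset.mem_sdiff.mp hx2).1
      rw [hqq, Finset.mem_insert, Finset.mem_insert, Finset.mem_insert,
        Finset.mem_singleton] at hxq
      refine ⟨?_, htC⟩
      rcases hxq with rfl | rfl | rfl | rfl
      · rw [ht, he_a]; tauto
      · rw [ht, he_b]; tauto
      · rw [ht, he_c]; tauto
      · rw [ht, he_d]; tauto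
    · rintro ⟨h4, htC⟩
      refine ⟨htC, ?_⟩
      rcases h4 with rfl | rfl | rfl | rfl <;>
        · intro y hy
          simp only [Finset.mem_insert, Finset.mem_singleton] at hy
          rw [hqq]
          simp only [Finset.mem_insert, Finset.mem_singleton]
          tauto
  have h12 : ({b,c,d} : Finset Ω) ≠ {a,c,d} := fun h => ha1 (by rw [h]; simp)
  have h13 : ({b,c,d} : Finset Ω) ≠ {a,b,d} := fun h => ha1 (by rw [h]; simp)
  have h14 : ({b,c,d} : Finset Ω) ≠ {a,b,c} := fun h => ha1 (by rw [h]; simp)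
  have h23 : ({a,c,d} : Finset Ω) ≠ {a,b,d} := fun h => hb1 (by rw [h]; simp)
  have h24 : ({a,c,d} : Finset Ω) ≠ {a,b,c} := fun h => hb1 (by rw [h]; simp)
  have h34 : ({a,b,d} : Finset Ω) ≠ {a,b,c} := fun h => hc1 (by rw [h]; simp)
  rw [hset, Set.ncard_coe_finset, Finset.card_filter,
    Finset.sum_insert (by simp [h12, h13, h14]),
    Finset.sum_insert (by simp [h23, h24]),
    Finset.sum_insert (by simp [h34]), Finset.sum_singleton]
  have e1 : (({b,c,d} : Finset Ω) ∈ C) = (g b c + g b d + g c d = 0) :=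
    propext (hC b c d hbc hbd hcd)
  have e2 : (({a,c,d} : Finset Ω) ∈ C) = (g a c + g a d + g c d = 0) :=
    propext (hC a c d hac had hcd)
  have e3 : (({a,b,d} : Finset Ω) ∈ C) = (g a b + g a d + g b d = 0) :=
    propext (hC a b d hab had hbd)
  have e4 : (({a,b,c} : Finset Ω) ∈ C) = (g a b + g a c + g b c = 0) :=
    propext (hC a b c hab hac hbc)
  simp only [e1, e2, e3, e4]
  exact parity_key (g a b) (g a c) (g a d) (g b c) (g b d) (g c d)


lemma collinear_triple_iffA {x y z : Vsp m} (hxy : x ≠ y) (hxz : x ≠ z) (hyz : y ≠ z) :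
    ({x, y, z} : Finset (Vsp m)) ∈ collinearTriples (linesA m)
      ↔ beta x y + beta x z + beta y z = 0 := by
  rw [mem_collinearA]
  have hnm : x ∉ ({y, z} : Finset (Vsp m)) := by simp [hxy, hxz]
  have h3 : ({x, y, z} : Finset (Vsp m)).card = 3 := by
    rw [Finset.card_insert_of_notMem hnm, Finset.card_pair hyz]
  simp only [h3, true_and]
  rw [Finset.sum_insert hnm, Finset.sum_pair hyz,
    Finset.sum_insert hnm, Finset.sum_pair hyz, ← add_assoc, theta_three]
  generalize theta x = x1
  generalize theta y = x2
  generalize theta z = x3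
  generalize beta x y = y1
  generalize beta x z = y2
  generalize beta y z = y3
  revert x1 x2 x3 y1 y2 y3
  decide

lemma collinear_triple_iffE {ε : ZMod 2} {x y z : {v : Vsp m // theta v = ε}}
    (hxy : x ≠ y) (hxz : x ≠ z) (hyz : y ≠ z) :
    ({x, y, z} : Finset {v : Vsp m // theta v = ε}) ∈ collinearTriples (linesEps m ε)
      ↔ beta (x : Vsp m) (y : Vsp m) + beta (x : Vsp m) (z : Vsp m)
          + beta (y : Vsp m) (z : Vsp m) = 0 := by
  rw [mem_collinearE]
  have hnm : x ∉ ({y, z} : Finset {v : Vsp m // theta v = ε}) := by simp [hxy, hxz]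
  have h3 : ({x, y, z} : Finset {v : Vsp m // theta v = ε}).card = 3 := by
    rw [Finset.card_insert_of_notMem hnm, Finset.card_pair hyz]
  simp only [h3, true_and]
  rw [Finset.sum_insert hnm, Finset.sum_pair hyz, ← add_assoc, theta_three, x.2, y.2, z.2]
  exact (by decide : ∀ e B : ZMod 2, (e + e + e + B = e ↔ B = 0)) ε _

lemma symmA : SymmDiffCond (linesA m) := by
  intro L1 h1 L2 h2 hcap
  obtain ⟨hc1, hs1, ht1⟩ := h1
  obtain ⟨hc2, hs2, ht2⟩ := h2
  have hsd : symmDiff L1 L2 = (L1 ∪ L2) \ (L1 ∩ L2) := symmDiff_eq_sup_sdiff_inf L1 L2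
  have hsub : L1 ∩ L2 ⊆ L1 ∪ L2 := Finset.inter_subset_left.trans Finset.subset_union_left
  have hcui := Finset.card_union_add_card_inter L1 L2
  refine ⟨?_, ?_, ?_⟩
  · rw [hsd, Finset.card_sdiff_of_subset hsub]; omega
  · rw [hsd]
    have hu := Finset.sum_union_inter (s₁ := L1) (s₂ := L2) (f := fun v : Vsp m => v)
    rw [hs1, hs2, add_zero] at hu
    have hd := Finset.sum_sdiff (f := fun v : Vsp m => v) hsub
    rw [veq hu] at hd
    exact add_right_cancel (hd.trans (zero_add _).symm)
  · rw [hsd]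
    have hu := Finset.sum_union_inter (s₁ := L1) (s₂ := L2) (f := theta)
    rw [ht1, ht2, add_zero] at hu
    have hd := Finset.sum_sdiff (f := theta) hsub
    rw [zeq.mp hu] at hd
    exact add_right_cancel (hd.trans (zero_add _).symm)

lemma symmE (ε : ZMod 2) : SymmDiffCond (linesEps m ε) := by
  intro L1 h1 L2 h2 hcap
  obtain ⟨hc1, hs1⟩ := h1
  obtain ⟨hc2, hs2⟩ := h2
  have hsd : symmDiff L1 L2 = (L1 ∪ L2) \ (L1 ∩ L2) := symmDiff_eq_sup_sdiff_inf L1 L2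
  have hsub : L1 ∩ L2 ⊆ L1 ∪ L2 := Finset.inter_subset_left.trans Finset.subset_union_left
  have hcui := Finset.card_union_add_card_inter L1 L2
  refine ⟨?_, ?_⟩
  · rw [hsd, Finset.card_sdiff_of_subset hsub]; omega
  · rw [hsd]
    have hu := Finset.sum_union_inter (s₁ := L1) (s₂ := L2)
      (f := fun v : {v : Vsp m // theta v = ε} => (v : Vsp m))
    rw [hs1, hs2, add_zero] at hu
    have hd := Finset.sum_sdiff (f := fun v : {v : Vsp m // theta v = ε} => (v : Vsp m)) hsub
    rw [veq hu] at hd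
    exact add_right_cancel (hd.trans (zero_add _).symm)

lemma regularA (hm : 1 ≤ m) : IsRegularTwoGraph (collinearTriples (linesA m)) := by
  refine ⟨fun t ht => ht.1, ⟨2 ^ (2 * m - 1) - 2, fun p hp => muA hm hp⟩, fun q hq => ?_⟩
  exact four_count _ beta (fun x y z hxy hxz hyz => collinear_triple_iffA hxy hxz hyz)
    (fun t ht => ht.1) hq

lemma regularE (hm : 1 ≤ m) (ε : ZMod 2) :
    IsRegularTwoGraph (collinearTriples (linesEps m ε)) := by
  refine ⟨fun t ht => ht.1,
    ⟨((univ.filter fun c : Vsp m => theta c = ε).card - 2 ^ (2 * m - 2)) - 2,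
      fun p hp => muE hm ε hp⟩, fun q hq => ?_⟩
  exact four_count _ (fun x y : {v : Vsp m // theta v = ε} => beta (x : Vsp m) (y : Vsp m))
    (fun x y z hxy hxz hyz => collinear_triple_iffE hxy hxz hyz)
    (fun t ht => ht.1) hq

end SympAux

/-- Lemma 2.13: for `m ≥ 2`, the designs `D^a` and `D^ε` (`ε ∈ F_2`)
satisfy (△), and in each case the collinear triples form a regular two-graph on the
point set. -/
theorem symplectic_designs_properties (m : ℕ) (hm : 2 ≤ m) :
    SymmDiffCond (linesA m) ∧
    IsRegularTwoGraph (collinearTriples (linesA m)) ∧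
    ∀ ε : ZMod 2,
      SymmDiffCond (linesEps m ε) ∧
      IsRegularTwoGraph (collinearTriples (linesEps m ε)) := by
  have hm1 : 1 ≤ m := by omega
  exact ⟨SympAux.symmA, SympAux.regularA hm1,
    fun ε => ⟨SympAux.symmE ε, SympAux.regularE hm1 ε⟩⟩
end

section
/- Assume Hypotheses 4.1. If {w,x,y,z} ∈ B is a line, then the elementary moves satisfy [w,x] = [y,z]. -/
open Equiv

variable {Ω : Type*}

private lemma card_triple_le' {Ω : Type*} [DecidableEq Ω] (a b c : Ω) :
    ({a, b, c} : Finset Ω).card ≤ 3 := by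
  have h1 := Finset.card_insert_le a ({b, c} : Finset Ω)
  have h2 := Finset.card_insert_le b ({c} : Finset Ω)
  have h3 : ({c} : Finset Ω).card = 1 := Finset.card_singleton c
  omega

private lemma card4_distinct' {Ω : Type*} [DecidableEq Ω] {w x y z : Ω}
    (h : ({w, x, y, z} : Finset Ω).card = 4) :
    w ≠ x ∧ w ≠ y ∧ w ≠ z ∧ x ≠ y ∧ x ≠ z ∧ y ≠ z := by
  refine ⟨?_, ?_, ?_, ?_, ?_, ?_⟩ <;> rintro rfl
  · rw [show ({w, w, y, z} : Finset Ω) = {w, y, z} from by ext a; simp only [Finset.mem_insert, Finset.mem_singleton]; tauto] at h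
    have := card_triple_le' w y z; omega
  · rw [show ({w, x, w, z} : Finset Ω) = {w, x, z} from by ext a; simp only [Finset.mem_insert, Finset.mem_singleton]; tauto] at h
    have := card_triple_le' w x z; omega
  · rw [show ({w, x, y, w} : Finset Ω) = {w, x, y} from by ext a; simp only [Finset.mem_insert, Finset.mem_singleton]; tauto] at h
    have := card_triple_le' w x y; omega
  · rw [show ({w, x, x, z} : Finset Ω) = {w, x, z} from by ext a; simp only [Finset.mem_insert, Finset.mem_singleton]; tauto] at h
    have := card_triple_le' w x z; omega
  · rw [show ({w, x, y, x} : Finset Ω) = {w, x, y} from by ext a; simp only [Finset.mem_insert, Finset.mem_singleton]; tauto] at h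
    have := card_triple_le' w x y; omega
  · rw [show ({w, x, y, y} : Finset Ω) = {w, x, y} from by ext a; simp only [Finset.mem_insert, Finset.mem_singleton]; tauto] at h
    have := card_triple_le' w x y; omega

private lemma symmDiff_quad' {Ω : Type*} [DecidableEq Ω] {w x y z p q : Ω}
    (hwy : w ≠ y) (hwz : w ≠ z) (hwp : w ≠ p) (hwq : w ≠ q)
    (hxy : x ≠ y) (hxz : x ≠ z) (hxp : x ≠ p) (hxq : x ≠ q)
    (hyp : y ≠ p) (hyq : y ≠ q) (hzp : z ≠ p) (hzq : z ≠ q) :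
    symmDiff ({w, x, y, z} : Finset Ω) ({w, x, p, q} : Finset Ω) = {y, z, p, q} := by
  ext a
  simp only [Finset.mem_symmDiff, Finset.mem_insert, Finset.mem_singleton]
  constructor
  · rintro (⟨h1, h2⟩ | ⟨h1, h2⟩) <;> rcases h1 with rfl | rfl | rfl | rfl <;> tauto
  · rintro (rfl | rfl | rfl | rfl)
    · exact Or.inl ⟨by tauto, by simp [Ne.symm hwy, Ne.symm hxy, hyp, hyq]⟩
    · exact Or.inl ⟨by tauto, by simp [Ne.symm hwz, Ne.symm hxz, hzp, hzq]⟩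
    · exact Or.inr ⟨by tauto, by simp [Ne.symm hwp, Ne.symm hxp, Ne.symm hyp, Ne.symm hzp]⟩
    · exact Or.inr ⟨by tauto, by simp [Ne.symm hwq, Ne.symm hxq, Ne.symm hyq, Ne.symm hzq]⟩

set_option maxHeartbeats 1000000 in
/-- Lemma 4.3: under Hypotheses 4.1, if `{w,x,y,z}` is a line then
`[w,x] = [y,z]`. -/
theorem elemMove_eq_of_line [Fintype Ω] [DecidableEq Ω]
    {B : Set (Finset Ω)} {n lam : ℕ}
    (hD : IsDesign B n lam) (hss : Supersimple B) (hsd : SymmDiffCond B)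
    (hRT : IsRegularTwoGraph (collinearTriples B))
    (mv : Ω → Ω → Equiv.Perm Ω) (hmv : IsElemMoveFn B mv)
    (w x y z : Ω) (hline : ({w, x, y, z} : Finset Ω) ∈ B) :
    mv w x = mv y z := by
  obtain ⟨-, hL4, -⟩ := hD
  have hLc : ({w, x, y, z} : Finset Ω).card = 4 := hL4 _ hline
  obtain ⟨hwx, hwy, hwz, hxy, hxz, hyz⟩ := card4_distinct' hLc
  obtain ⟨hid, hne⟩ := hmv
  obtain ⟨hwx1, hwx2, hwxB, hwxfix⟩ := hne w x hwx
  obtain ⟨hyz1, hyz2, hyzB, hyzfix⟩ := hne y z hyz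
  have hline' : ({y, z, w, x} : Finset Ω) ∈ B := by
    rw [show ({y, z, w, x} : Finset Ω) = {w, x, y, z} from by ext a; simp only [Finset.mem_insert, Finset.mem_singleton]; tauto]; exact hline
  have hlineA : ({w, x, z, y} : Finset Ω) ∈ B := by
    rw [show ({w, x, z, y} : Finset Ω) = {w, x, y, z} from by ext a; simp only [Finset.mem_insert, Finset.mem_singleton]; tauto]; exact hline
  have hlineB : ({y, z, x, w} : Finset Ω) ∈ B := by
    rw [show ({y, z, x, w} : Finset Ω) = {w, x, y, z} from by ext a; simp only [Finset.mem_insert, Finset.mem_singleton]; tauto]; exact hline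
  ext p
  by_cases hpw : p = w
  · rw [hpw, hwx1, hyzB w x hline']
  by_cases hpx : p = x
  · rw [hpx, hwx2, hyzB x w hlineB]
  by_cases hpy : p = y
  · rw [hpy, hwxB y z hline, hyz1]
  by_cases hpz : p = z
  · rw [hpz, hwxB z y hlineA, hyz2]
  -- now p is off the line
  have hpL : p ∉ ({w, x, y, z} : Finset Ω) := by simp [hpw, hpx, hpy, hpz]
  by_cases hex : ∃ L' ∈ B, w ∈ L' ∧ x ∈ L' ∧ p ∈ L'
  · obtain ⟨L', hL'B, hwL', hxL', hpL'⟩ := hex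
    have hLne : ({w, x, y, z} : Finset Ω) ≠ L' := by
      intro he; rw [← he] at hpL'; exact hpL hpL'
    have hsub3 : ({w, x, p} : Finset Ω) ⊆ L' := by
      intro a ha; simp at ha; rcases ha with rfl | rfl | rfl <;> assumption
    have hc3 : ({w, x, p} : Finset Ω).card = 3 := by
      rw [Finset.card_insert_of_notMem (by simp [hwx, Ne.symm hpw]),
        Finset.card_insert_of_notMem (by simp [Ne.symm hpx]), Finset.card_singleton]
    have hsd1 : (L' \ ({w, x, p} : Finset Ω)).card = 1 := by
      rw [Finset.card_sdiff_of_subset hsub3, hL4 _ hL'B, hc3]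
    obtain ⟨q, hq⟩ := Finset.card_eq_one.mp hsd1
    have hqmem : q ∈ L' \ ({w, x, p} : Finset Ω) := by rw [hq]; simp
    obtain ⟨hqL', hqn⟩ := Finset.mem_sdiff.mp hqmem
    simp only [Finset.mem_insert, Finset.mem_singleton, not_or] at hqn
    obtain ⟨hqw, hqx, hqp⟩ := hqn
    have hL'eq : L' = {w, x, p, q} := by
      have hu := Finset.sdiff_union_of_subset hsub3
      rw [hq] at hu
      rw [← hu]; ext a; simp only [Finset.mem_union, Finset.mem_insert, Finset.mem_singleton]; tauto
    -- intersection is {w,x}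
    have hsubi : ({w, x} : Finset Ω) ⊆ ({w, x, y, z} : Finset Ω) ∩ L' := by
      intro a ha; simp at ha; rcases ha with rfl | rfl <;> simp [hwL', hxL']
    have hc2 : ({w, x} : Finset Ω).card = 2 := by
      rw [Finset.card_insert_of_notMem (by simp [hwx]), Finset.card_singleton]
    have hle := hss _ hline _ hL'B hLne
    have hinter : ({w, x, y, z} : Finset Ω) ∩ L' = {w, x} :=
      (Finset.eq_of_subset_of_card_le hsubi (by omega)).symm
    have hqL : q ∉ ({w, x, y, z} : Finset Ω) := by
      intro hqLm
      have : q ∈ ({w, x} : Finset Ω) := by rw [← hinter]; exact Finset.mem_inter.mpr ⟨hqLm, hqL'⟩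
      simp at this; tauto
    simp only [Finset.mem_insert, Finset.mem_singleton, not_or] at hqL hpL
    obtain ⟨hqw', hqx', hqy, hqz⟩ := hqL
    obtain ⟨-, -, hpy', hpz'⟩ := hpL
    have hyL' : y ∉ L' := by
      intro hm
      have : y ∈ ({w, x} : Finset Ω) := by rw [← hinter]; exact Finset.mem_inter.mpr ⟨by simp, hm⟩
      simp at this; tauto
    have hzL' : z ∉ L' := by
      intro hm
      have : z ∈ ({w, x} : Finset Ω) := by rw [← hinter]; exact Finset.mem_inter.mpr ⟨by simp, hm⟩
      simp at this; tauto
    have hsymm := hsd _ hline _ hL'B (by rw [hinter, hc2])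
    rw [hL'eq] at hsymm
    rw [symmDiff_quad' hwy hwz (Ne.symm hpw) (Ne.symm hqw) hxy hxz (Ne.symm hpx)
      (Ne.symm hqx) (Ne.symm hpy') (Ne.symm hqy) (Ne.symm hpz') (Ne.symm hqz)] at hsymm
    rw [hwxB p q (hL'eq ▸ hL'B), hyzB p q hsymm]
  · push_neg at hex
    rw [hwxfix p (Ne.symm (Ne.symm hpw)) hpx (by intro L hL h; exact hex L hL h.1 h.2.1 h.2.2)]
    refine (hyzfix p hpy hpz ?_).symm
    rintro L'' hL''B ⟨hyL'', hzL'', hpL''⟩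
    have hLne : ({w, x, y, z} : Finset Ω) ≠ L'' := by
      intro he; rw [← he] at hpL''; exact hpL (by simpa using hpL'')
    have hsubi : ({y, z} : Finset Ω) ⊆ ({w, x, y, z} : Finset Ω) ∩ L'' := by
      intro a ha; simp at ha; rcases ha with rfl | rfl <;> simp [hyL'', hzL'']
    have hc2 : ({y, z} : Finset Ω).card = 2 := by
      rw [Finset.card_insert_of_notMem (by simp [hyz]), Finset.card_singleton]
    have hle := hss _ hline _ hL''B hLne
    have hinter : ({w, x, y, z} : Finset Ω) ∩ L'' = {y, z} :=
      (Finset.eq_of_subset_of_card_le hsubi (by omega)).symm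
    have hwL'' : w ∉ L'' := by
      intro hm
      have : w ∈ ({y, z} : Finset Ω) := by rw [← hinter]; exact Finset.mem_inter.mpr ⟨by simp, hm⟩
      simp at this; tauto
    have hxL'' : x ∉ L'' := by
      intro hm
      have : x ∈ ({y, z} : Finset Ω) := by rw [← hinter]; exact Finset.mem_inter.mpr ⟨by simp, hm⟩
      simp at this; tauto
    have hsymm := hsd _ hline _ hL''B (by rw [hinter, hc2])
    refine hex _ hsymm ?_ ?_ ?_
    · exact Finset.mem_symmDiff.mpr (Or.inl ⟨by simp, hwL''⟩)
    · exact Finset.mem_symmDiff.mpr (Or.inl ⟨by simp, hxL''⟩)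
    · exact Finset.mem_symmDiff.mpr (Or.inr ⟨hpL'', by simpa using hpL⟩)
end
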